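/- arXiv:1902.05043 — 4 statements merged into one kernel-verified Lean document; each statement's English description precedes it below -/
import Mathlib

section
/- Let p ∈ (1,2), n ∈ ℕ, and a_i = (n/i)^{1/p} for i = 1,…,n. Then for all integers 1 ≤ m ≤ n, (1/n)∑_{i=1}^m a_i + (m/n)^{1/2} · ((1/n)∑_{i=m+1}^n a_i^2)^{1/2} ≤ (2/(1-1/p) + (2/p - 1)^{-1/2}) · (m/n)^{1-1/p}. -/
open Finset Real

-- pointwise A: for 0 < t ≤ 1, 1 ≤ x : t * x^(t-1) ≤ x^t - (x-1)^t
lemma ptA {t : ℝ} (ht0 : 0 < t) (ht1 : t ≤ 1) {x : ℝ} (hx : 1 ≤ x) :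
    t * x ^ (t - 1) ≤ x ^ t - (x - 1) ^ t := by
  have hx0 : (0:ℝ) < x := lt_of_lt_of_le one_pos hx
  have key : (x - 1) ^ t ≤ x ^ t * (1 + t * (-1/x)) := by
    have h1 : x - 1 = x * (1 + (-1/x)) := by field_simp; ring
    have h2 : (0:ℝ) ≤ 1 + (-1/x) := by
      have : 1/x ≤ 1 := by rw [div_le_one hx0]; linarith
      simp only [neg_div]; linarith
    rw [h1, Real.mul_rpow hx0.le h2]
    have := rpow_one_add_le_one_add_mul_self (s := -1/x)
      (by rw [neg_div, neg_le_neg_iff, div_le_one hx0]; exact hx) ht0.le ht1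
    have hxt : (0:ℝ) ≤ x ^ t := (Real.rpow_pos_of_pos hx0 t).le
    nlinarith [this]
  have h3 : x ^ t * (1 + t * (-1/x)) = x ^ t - t * x ^ (t-1) := by
    rw [Real.rpow_sub hx0, Real.rpow_one]
    field_simp
    ring
  linarith [key, h3.symm.le]

-- pointwise B: for 0 < u < 1, 1 < x : u * x^(-u-1) ≤ (x-1)^(-u) - x^(-u)
lemma ptB {u : ℝ} (hu0 : 0 < u) (hu1 : u < 1) {x : ℝ} (hx : 1 < x) :
    u * x ^ (-u - 1) ≤ (x - 1) ^ (-u) - x ^ (-u) := by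
  have hx0 : (0:ℝ) < x := lt_trans one_pos hx
  have hx1 : (0:ℝ) < x - 1 := by linarith
  have hux : u / x < 1 := by
    rw [div_lt_one hx0]; linarith
  have hc : (0:ℝ) < 1 - u/x := by linarith
  -- Bernoulli: ((x-1)/x)^u ≤ 1 - u/x
  have hb : ((x-1)/x) ^ u ≤ 1 - u/x := by
    have h1 : (x-1)/x = 1 + (-1/x) := by field_simp; ring
    rw [h1]
    have := rpow_one_add_le_one_add_mul_self (s := -1/x)
      (by rw [neg_div, neg_le_neg_iff, div_le_one hx0]; linarith) hu0.le hu1.le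
    calc (1 + (-1/x)) ^ u ≤ 1 + u * (-1/x) := this
      _ = 1 - u/x := by ring
  -- hence ((x-1)/x)^(-u) ≥ 1 + u/x
  have hq : (0:ℝ) < (x-1)/x := div_pos hx1 hx0
  have hb2 : 1 + u/x ≤ ((x-1)/x) ^ (-u) := by
    rw [Real.rpow_neg hq.le]
    rw [le_inv_comm₀ (by positivity) (Real.rpow_pos_of_pos hq u)]
    calc ((x-1)/x) ^ u ≤ 1 - u/x := hb
      _ ≤ (1 + u/x)⁻¹ := by
          rw [inv_eq_one_div, le_div_iff₀ (by positivity)]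
          nlinarith [sq_nonneg (u/x)]
  -- (x-1)^(-u) = x^(-u) * ((x-1)/x)^(-u)
  have hsplit : (x-1) ^ (-u) = x ^ (-u) * ((x-1)/x) ^ (-u) := by
    rw [← Real.mul_rpow hx0.le hq.le]
    congr 1
    field_simp
  have hxu : (0:ℝ) < x ^ (-u) := Real.rpow_pos_of_pos hx0 _
  have h4 : x ^ (-u) * (1 + u/x) ≤ (x-1) ^ (-u) := by
    rw [hsplit]
    exact mul_le_mul_of_nonneg_left hb2 hxu.le
  have h5 : x ^ (-u) * (1 + u/x) = x ^ (-u) + u * x ^ (-u-1) := by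
    rw [Real.rpow_sub hx0, Real.rpow_one]
    field_simp
  linarith [h4, h5.symm.le]

lemma sumA {s : ℝ} (hs0 : 0 < s) (hs1 : s < 1) (m : ℕ) :
    ∑ i ∈ Icc 1 m, (i:ℝ) ^ (-s) ≤ (m:ℝ) ^ (1-s) / (1-s) := by
  have ht0 : (0:ℝ) < 1 - s := by linarith
  have h0 : ∑ i ∈ Icc 1 m, (i:ℝ) ^ (-s) = ∑ i ∈ Finset.range m, ((i+1:ℕ):ℝ) ^ (-s) := by
    rw [← Finset.Ico_add_one_right_eq_Icc, Finset.sum_Ico_eq_sum_range]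
    simp [Nat.add_comm]
  rw [h0]
  calc ∑ i ∈ Finset.range m, ((i+1:ℕ):ℝ) ^ (-s)
      ≤ ∑ i ∈ Finset.range m, (((i+1:ℕ):ℝ) ^ (1-s) - ((i:ℕ):ℝ) ^ (1-s)) / (1-s) := by
        apply Finset.sum_le_sum
        intro i _
        rw [le_div_iff₀ ht0]
        have hx : (1:ℝ) ≤ ((i+1:ℕ):ℝ) := by push_cast; linarith [Nat.cast_nonneg (α := ℝ) i]
        have := ptA ht0 (by linarith) hx
        have he : ((i+1:ℕ):ℝ) - 1 = ((i:ℕ):ℝ) := by push_cast; ring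
        rw [he] at this
        have he2 : (1 - s) - 1 = -s := by ring
        rw [he2] at this
        linarith
    _ = (((m:ℕ):ℝ) ^ (1-s) - ((0:ℕ):ℝ) ^ (1-s)) / (1-s) := by
        rw [← Finset.sum_div, Finset.sum_range_sub (f := fun j : ℕ => ((j:ℕ):ℝ) ^ (1-s))]
    _ = (m:ℝ) ^ (1-s) / (1-s) := by
        norm_num [Real.zero_rpow ht0.ne']

lemma sumB {u : ℝ} (hu0 : 0 < u) (hu1 : u < 1) {m n : ℕ} (hm : 1 ≤ m) :
    ∑ i ∈ Icc (m+1) n, (i:ℝ) ^ (-u-1) ≤ (m:ℝ) ^ (-u) / u := by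
  have h0 : ∑ i ∈ Icc (m+1) n, (i:ℝ) ^ (-u-1)
      = ∑ i ∈ Finset.range (n - m), ((m+1+i:ℕ):ℝ) ^ (-u-1) := by
    rw [← Finset.Ico_add_one_right_eq_Icc, Finset.sum_Ico_eq_sum_range]
    have : n + 1 - (m + 1) = n - m := by omega
    rw [this]
  rw [h0]
  have hmpos : (0:ℝ) < (m:ℝ) := by exact_mod_cast hm
  calc ∑ i ∈ Finset.range (n-m), ((m+1+i:ℕ):ℝ) ^ (-u-1)
      ≤ ∑ i ∈ Finset.range (n-m), (((m+i:ℕ):ℝ) ^ (-u) - ((m+(i+1):ℕ):ℝ) ^ (-u)) / u := by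
        apply Finset.sum_le_sum
        intro i _
        rw [le_div_iff₀ hu0]
        have hx : (1:ℝ) < ((m+1+i:ℕ):ℝ) := by
          push_cast
          have : (1:ℝ) ≤ (m:ℝ) := by exact_mod_cast hm
          linarith [Nat.cast_nonneg (α := ℝ) i]
        have := ptB hu0 hu1 hx
        have he : ((m+1+i:ℕ):ℝ) - 1 = ((m+i:ℕ):ℝ) := by push_cast; ring
        rw [he] at this
        have he2 : ((m+(i+1):ℕ):ℝ) = ((m+1+i:ℕ):ℝ) := by push_cast; ring
        rw [he2]
        linarith
    _ = (((m+0:ℕ):ℝ) ^ (-u) - ((m+(n-m):ℕ):ℝ) ^ (-u)) / u := by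
        rw [← Finset.sum_div, Finset.sum_range_sub' (f := fun j : ℕ => ((m+j:ℕ):ℝ) ^ (-u))]
    _ ≤ (m:ℝ) ^ (-u) / u := by
        have hB : (0:ℝ) ≤ ((m+(n-m):ℕ):ℝ) ^ (-u) := Real.rpow_nonneg (Nat.cast_nonneg _) _
        have hA : ((m+0:ℕ):ℝ) ^ (-u) = (m:ℝ) ^ (-u) := by norm_num
        rw [hA]
        gcongr
        linarith


lemma log_eq_imp_eq {x y : ℝ} (hx : 0 < x) (hy : 0 < y) (h : Real.log x = Real.log y) :
    x = y := by
  calc x = Real.exp (Real.log x) := (Real.exp_log hx).symm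
    _ = Real.exp (Real.log y) := by rw [h]
    _ = y := Real.exp_log hy

lemma rpow_id1 {M N s : ℝ} (hM : 0 < M) (hN : 0 < N) :
    (1/N) * (N ^ s * M ^ (1-s)) = (M/N) ^ (1-s) := by
  have hMN : (0:ℝ) < M / N := div_pos hM hN
  apply log_eq_imp_eq (by positivity) (by positivity)
  rw [Real.log_mul (by positivity) (by positivity),
      Real.log_mul (by positivity) (by positivity),
      Real.log_rpow hN, Real.log_rpow hM, Real.log_rpow hMN,
      Real.log_div hM.ne' hN.ne', one_div, Real.log_inv]
  ring

lemma rpow_id2 {M N u : ℝ} (hM : 0 < M) (hN : 0 < N) (hu : 0 < u) :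
    (M/N) ^ ((1:ℝ)/2) * ((1/N) * (N ^ (u+1) * (M ^ (-u) / u))) ^ ((1:ℝ)/2)
      = u ^ (-(1:ℝ)/2) * (M/N) ^ ((1-u)/2) := by
  have hMN : (0:ℝ) < M / N := div_pos hM hN
  have hin : (0:ℝ) < (1/N) * (N ^ (u+1) * (M ^ (-u)/u)) := by positivity
  apply log_eq_imp_eq (by positivity) (by positivity)
  rw [Real.log_mul (by positivity) (by positivity),
      Real.log_mul (by positivity) (by positivity),
      Real.log_rpow hMN, Real.log_rpow hin, Real.log_rpow hu, Real.log_rpow hMN,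
      Real.log_mul (by positivity) (by positivity),
      Real.log_mul (by positivity) (by positivity),
      Real.log_rpow hN,
      Real.log_div (by positivity) hu.ne',
      Real.log_rpow hM,
      Real.log_div one_ne_zero hN.ne', Real.log_one,
      Real.log_div hM.ne' hN.ne']
  ring

theorem stmt_3 (n : ℕ) (p : ℝ) (hp1 : 1 < p) (hp2 : p < 2)
    (a : ℕ → ℝ) (ha : ∀ i ∈ Finset.Icc 1 n, a i = ((n : ℝ) / i) ^ (1 / p))
    (m : ℕ) (hm1 : 1 ≤ m) (hmn : m ≤ n) :
    (1 / (n : ℝ)) * ∑ i ∈ Finset.Icc 1 m, a i +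
      ((m : ℝ) / n) ^ ((1 : ℝ) / 2) *
        ((1 / (n : ℝ)) * ∑ i ∈ Finset.Icc (m + 1) n, (a i) ^ (2 : ℝ)) ^ ((1 : ℝ) / 2) ≤
      (2 / (1 - 1 / p) + (2 / p - 1) ^ (-(1 : ℝ) / 2)) * ((m : ℝ) / n) ^ (1 - 1 / p) := by
  have hp0 : 0 < p := by linarith
  set s : ℝ := 1 / p with hsdef
  have hs0 : 0 < s := by positivity
  have hs1 : s < 1 := by rw [hsdef, div_lt_one hp0]; exact hp1
  have hs2 : 1/2 < s := by
    rw [hsdef, div_lt_div_iff₀ (by norm_num) hp0]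
    linarith
  set u : ℝ := 2*s - 1 with hudef
  have hu0 : 0 < u := by rw [hudef]; linarith
  have hu1 : u < 1 := by rw [hudef]; linarith
  have hm0 : (0:ℝ) < m := by exact_mod_cast hm1
  have hn0 : (0:ℝ) < n := by exact_mod_cast lt_of_lt_of_le Nat.zero_lt_one (le_trans hm1 hmn)
  have hMN : (0:ℝ) < (m:ℝ)/(n:ℝ) := div_pos hm0 hn0
  have h2pu : 2/p - 1 = u := by rw [hudef, hsdef]; ring
  rw [h2pu]
  have hsum1 : ∑ i ∈ Icc 1 m, a i = (n:ℝ)^s * ∑ i ∈ Icc 1 m, (i:ℝ)^(-s) := by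
    rw [Finset.mul_sum]
    apply Finset.sum_congr rfl
    intro i hi
    obtain ⟨hi1, hi2⟩ := Finset.mem_Icc.mp hi
    have hi0 : (0:ℝ) < i := by exact_mod_cast hi1
    rw [ha i (Finset.mem_Icc.mpr ⟨hi1, le_trans hi2 hmn⟩),
        Real.div_rpow (Nat.cast_nonneg n) (Nat.cast_nonneg i), Real.rpow_neg hi0.le,
        div_eq_mul_inv]
  have hsum2 : ∑ i ∈ Icc (m+1) n, (a i)^(2:ℝ)
      = (n:ℝ)^(u+1) * ∑ i ∈ Icc (m+1) n, (i:ℝ)^(-u-1) := by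
    rw [Finset.mul_sum]
    apply Finset.sum_congr rfl
    intro i hi
    obtain ⟨hi1, hi2⟩ := Finset.mem_Icc.mp hi
    have hi1' : 1 ≤ i := le_trans (Nat.le_add_left 1 m) hi1
    have hi0 : (0:ℝ) < i := by exact_mod_cast hi1'
    rw [ha i (Finset.mem_Icc.mpr ⟨hi1', hi2⟩),
        ← Real.rpow_mul (by positivity : (0:ℝ) ≤ (n:ℝ)/i),
        show s * 2 = u + 1 by rw [hudef]; ring,
        Real.div_rpow (Nat.cast_nonneg n) (Nat.cast_nonneg i),
        show -u-1 = -(u+1) by ring, Real.rpow_neg hi0.le, div_eq_mul_inv]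
  have hT1 : (1/(n:ℝ)) * ∑ i ∈ Icc 1 m, a i ≤ (1/(1-s)) * ((m:ℝ)/n)^(1-s) := by
    rw [hsum1]
    calc (1/(n:ℝ)) * ((n:ℝ)^s * ∑ i ∈ Icc 1 m, (i:ℝ)^(-s))
        ≤ (1/(n:ℝ)) * ((n:ℝ)^s * ((m:ℝ)^(1-s)/(1-s))) := by
          gcongr
          exact sumA hs0 hs1 m
      _ = (1/(1-s)) * ((1/(n:ℝ)) * ((n:ℝ)^s * (m:ℝ)^(1-s))) := by ring
      _ = (1/(1-s)) * ((m:ℝ)/n)^(1-s) := by rw [rpow_id1 hm0 hn0]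
  have hin_le : (1/(n:ℝ)) * ((n:ℝ)^(u+1) * ∑ i ∈ Icc (m+1) n, (i:ℝ)^(-u-1))
      ≤ (1/(n:ℝ)) * ((n:ℝ)^(u+1) * ((m:ℝ)^(-u)/u)) := by
    gcongr
    exact sumB hu0 hu1 hm1
  have hin_nonneg : (0:ℝ) ≤ (1/(n:ℝ)) * ((n:ℝ)^(u+1) * ∑ i ∈ Icc (m+1) n, (i:ℝ)^(-u-1)) :=
    mul_nonneg (by positivity) (mul_nonneg (by positivity)
      (Finset.sum_nonneg fun i _ => Real.rpow_nonneg (Nat.cast_nonneg i) _))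
  have hT2 : ((m:ℝ)/n)^((1:ℝ)/2) * ((1/(n:ℝ)) * ∑ i ∈ Icc (m+1) n, (a i)^(2:ℝ))^((1:ℝ)/2)
      ≤ u^(-(1:ℝ)/2) * ((m:ℝ)/n)^(1-s) := by
    rw [hsum2]
    calc ((m:ℝ)/n)^((1:ℝ)/2)
          * ((1/(n:ℝ)) * ((n:ℝ)^(u+1) * ∑ i ∈ Icc (m+1) n, (i:ℝ)^(-u-1)))^((1:ℝ)/2)
        ≤ ((m:ℝ)/n)^((1:ℝ)/2) * ((1/(n:ℝ)) * ((n:ℝ)^(u+1) * ((m:ℝ)^(-u)/u)))^((1:ℝ)/2) :=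
          mul_le_mul_of_nonneg_left (Real.rpow_le_rpow hin_nonneg hin_le (by norm_num))
            (Real.rpow_nonneg hMN.le _)
      _ = u^(-(1:ℝ)/2) * ((m:ℝ)/n)^((1-u)/2) := rpow_id2 hm0 hn0 hu0
      _ = u^(-(1:ℝ)/2) * ((m:ℝ)/n)^(1-s) := by
          rw [show (1-u)/2 = 1-s by rw [hudef]; ring]
  calc (1/(n:ℝ)) * ∑ i ∈ Finset.Icc 1 m, a i +
        ((m:ℝ)/n)^((1:ℝ)/2) * ((1/(n:ℝ)) * ∑ i ∈ Finset.Icc (m+1) n, (a i)^(2:ℝ))^((1:ℝ)/2)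
      ≤ (1/(1-s)) * ((m:ℝ)/n)^(1-s) + u^(-(1:ℝ)/2) * ((m:ℝ)/n)^(1-s) :=
        add_le_add hT1 hT2
    _ ≤ (2/(1-s) + u^(-(1:ℝ)/2)) * ((m:ℝ)/n)^(1-s) := by
        rw [add_mul]
        apply add_le_add_left
        apply mul_le_mul_of_nonneg_right _ (Real.rpow_nonneg hMN.le _)
        gcongr
        · linarith
end

section
/- Let 1 < p_ε < p, let M be an Orlicz function such that t ↦ M(t)/t^{p_ε} is non-increasing, n ∈ ℕ, and for 1 ≤ ℓ ≤ n define d_i via (M*)^{-1}(ℓ/n) = (1/n)∑_{i=1}^ℓ d_i. Then there exists a constant C depending only on p and p_ε such that for every ℓ = 1,…,n: (ℓ/n)^{1-1/p} · ((1/n)∑_{i=ℓ+1}^n d_i^p)^{1/p} ≤ C · (M*)^{-1}(ℓ/n). -/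
open Finset

/-- The Legendre (Young) conjugate of an Orlicz function, as a supremum over `t ≥ 0`. -/
noncomputable def orliczConj (M : ℝ → ℝ) (x : ℝ) : ℝ :=
  sSup {y : ℝ | ∃ t : ℝ, 0 ≤ t ∧ y = x * t - M t}

lemma conjSet_nonempty (M : ℝ → ℝ) (hM0 : M 0 = 0) (x : ℝ) :
    {y : ℝ | ∃ t : ℝ, 0 ≤ t ∧ y = x * t - M t}.Nonempty :=
  ⟨0, 0, le_refl 0, by simp [hM0]⟩

lemma conj_bddAbove {M : ℝ → ℝ} {x c : ℝ} (h : orliczConj M x = c) (hc : c ≠ 0) :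
    BddAbove {y : ℝ | ∃ t : ℝ, 0 ≤ t ∧ y = x * t - M t} := by
  by_contra hb
  rw [orliczConj, Real.sSup_of_not_bddAbove hb] at h
  exact hc h.symm

/-- Every element of the defining set is ≤ the conjugate value. -/
lemma conj_le {M : ℝ → ℝ} {x c : ℝ} (h : orliczConj M x = c) (hc : c ≠ 0) :
    ∀ s : ℝ, 0 ≤ s → x * s - M s ≤ c := by
  intro s hs
  have := le_csSup (conj_bddAbove h hc) (show x * s - M s ∈ _ from ⟨s, hs, rfl⟩)
  rwa [show sSup {y : ℝ | ∃ t : ℝ, 0 ≤ t ∧ y = x * t - M t} = c from h] at this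

/-- key "strict monotonicity" lemma -/
lemma conj_key {M : ℝ → ℝ} (hM0 : M 0 = 0) (hMnn : ∀ s : ℝ, 0 ≤ s → 0 ≤ M s)
    {z c x B : ℝ} (hz : orliczConj M z = c) (hc : 0 < c) (hzx : z ≤ x)
    (hB : ∀ s : ℝ, 0 ≤ s → x * s - M s ≤ B) : (x / z) * c ≤ B := by
  have hzpos : 0 < z := by
    by_contra hz0
    push_neg at hz0
    have : orliczConj M z ≤ 0 := by
      apply csSup_le (conjSet_nonempty M hM0 z)
      rintro y ⟨s, hs, rfl⟩
      have : z * s ≤ 0 := mul_nonpos_of_nonpos_of_nonneg hz0 hs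
      linarith [hMnn s hs]
    linarith [hz ▸ this]
  have hxpos : 0 < x := lt_of_lt_of_le hzpos hzx
  have hxz : 0 < x / z := div_pos hxpos hzpos
  have hz' : sSup {y : ℝ | ∃ t : ℝ, 0 ≤ t ∧ y = z * t - M t} = c := hz
  -- for every ε > 0, (x/z)*(c-ε) ≤ B
  have key : ∀ ε : ℝ, 0 < ε → (x / z) * (c - ε) ≤ B := by
    intro ε hε
    obtain ⟨y, ⟨s, hs, rfl⟩, hy⟩ :=
      exists_lt_of_lt_csSup (conjSet_nonempty M hM0 z)
        (show c - ε < sSup _ from by rw [hz']; linarith)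
    have h1 : (x / z) * (z * s - M s) ≤ x * s - M s := by
      have hxz1 : 1 ≤ x / z := (one_le_div hzpos).2 hzx
      have h2 : (x / z) * (z * s) = x * s := by field_simp
      nlinarith [hMnn s hs]
    calc (x / z) * (c - ε) ≤ (x / z) * (z * s - M s) :=
          mul_le_mul_of_nonneg_left (le_of_lt hy) (le_of_lt hxz)
      _ ≤ x * s - M s := h1
      _ ≤ B := hB s hs
  by_contra hlt
  push_neg at hlt
  set δ := ((x / z) * c - B) / (x / z) / 2 with hδ
  have hδpos : 0 < δ := by
    apply div_pos (div_pos (by linarith) hxz) (by norm_num)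
  have := key δ hδpos
  have h2 : (x / z) * δ = ((x / z) * c - B) / 2 := by
    rw [hδ]; field_simp
  nlinarith

/-- convexity through zero: for `0 ≤ a ≤ b`, `M a ≤ (a/b) M b`. -/
lemma conv_lin {M : ℝ → ℝ} (hM0 : M 0 = 0) (hconv : ConvexOn ℝ (Set.Ici 0) M)
    {a b : ℝ} (ha : 0 ≤ a) (hab : a ≤ b) (hb : 0 < b) : M a ≤ (a / b) * M b := by
  have h := hconv.2 (Set.mem_Ici.2 (le_of_lt hb)) (Set.mem_Ici.2 (le_refl (0:ℝ)))
    (show 0 ≤ a/b by positivity) (show 0 ≤ 1 - a/b by rw [sub_nonneg]; exact (div_le_one hb).2 hab)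
    (by ring)
  simp only [smul_eq_mul, mul_zero, add_zero, hM0] at h
  have h2 : a / b * b = a := by field_simp
  rw [h2] at h
  linarith

lemma starinv_pos {M : ℝ → ℝ} (hM0 : M 0 = 0) (hMnn : ∀ s : ℝ, 0 ≤ s → 0 ≤ M s)
    {v t : ℝ} (hv : orliczConj M v = t) (ht : 0 < t) : 0 < v := by
  by_contra hv0
  push_neg at hv0
  have : orliczConj M v ≤ 0 := by
    apply csSup_le (conjSet_nonempty M hM0 v)
    rintro y ⟨s, hs, rfl⟩
    have : v * s ≤ 0 := mul_nonpos_of_nonpos_of_nonneg hv0 hs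
    linarith [hMnn s hs]
  linarith [hv ▸ this]

/-- monotonicity of Mstarinv on positive arguments -/
lemma starinv_mono {M : ℝ → ℝ} (hM0 : M 0 = 0) (hMnn : ∀ s : ℝ, 0 ≤ s → 0 ≤ M s)
    {va vb a b : ℝ} (hva : orliczConj M va = a) (hvb : orliczConj M vb = b)
    (ha : 0 < a) (hab : a ≤ b) : va ≤ vb := by
  by_contra h
  push_neg at h
  have hb : 0 < b := lt_of_lt_of_le ha hab
  have hvbpos : 0 < vb := starinv_pos hM0 hMnn hvb hb
  have hk := conj_key hM0 hMnn hvb hb (le_of_lt h) (conj_le hva (ne_of_gt ha))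
  have h1 : 1 < va / vb := (one_lt_div hvbpos).2 h
  nlinarith

/-- Fact 1: `Mstarinv t ≤ 2 t / Minv t` -/
lemma starinv_le {M : ℝ → ℝ} {v u t : ℝ} (hv : orliczConj M v = t) (hu : M u = t)
    (hupos : 0 < u) (ht : 0 < t) : v ≤ 2 * t / u := by
  have h := conj_le hv (ne_of_gt ht) u (le_of_lt hupos)
  rw [hu] at h
  rw [le_div_iff₀ hupos]
  linarith

/-- Fact 2: `t / Minv t ≤ Mstarinv t` -/
lemma starinv_ge {M : ℝ → ℝ} (hM0 : M 0 = 0) (hMnn : ∀ s : ℝ, 0 ≤ s → 0 ≤ M s)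
    (hconv : ConvexOn ℝ (Set.Ici 0) M) {v u t : ℝ} (hv : orliczConj M v = t)
    (hvnn : 0 ≤ v) (hu : M u = t) (hupos : 0 < u) (ht : 0 < t) : t / u ≤ v := by
  by_contra h
  push_neg at h
  have hvut : v * u < t := by
    have := mul_lt_mul_of_pos_right h hupos
    rwa [div_mul_cancel₀ t (ne_of_gt hupos)] at this
  have hub : ∀ s : ℝ, 0 ≤ s → v * s - M s ≤ v * u := by
    intro s hs
    rcases le_or_gt s u with hsu | hsu
    · nlinarith [hMnn s hs, mul_le_mul_of_nonneg_left hsu hvnn,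
        mul_nonneg hvnn (le_of_lt hupos)]
    · have hspos : 0 < s := lt_trans hupos hsu
      have h1 := conv_lin hM0 hconv (le_of_lt hupos) (le_of_lt hsu) hspos
      rw [hu] at h1
      -- t ≤ (u/s) * M s, i.e. t * s ≤ u * M s
      have h2 : t * s ≤ u * M s := by
        have := mul_le_mul_of_nonneg_right h1 (le_of_lt hspos)
        calc t * s ≤ (u / s) * M s * s := this
          _ = u * M s := by field_simp
      nlinarith [mul_le_mul_of_nonneg_right (le_of_lt hvut) (le_of_lt hspos),
        mul_nonneg hvnn (le_of_lt hupos)]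
  have hle : t ≤ v * u := by
    have hs : sSup {y : ℝ | ∃ s : ℝ, 0 ≤ s ∧ y = v * s - M s} ≤ v * u :=
      csSup_le (conjSet_nonempty M hM0 v) (by rintro y ⟨s, hs, rfl⟩; exact hub s hs)
    calc t = orliczConj M v := hv.symm
      _ ≤ v * u := hs
  linarith

/-- Fact 3: concavity through zero of Mstarinv: `Mstarinv (λ t) ≥ λ Mstarinv t`. -/
lemma starinv_concave {M : ℝ → ℝ} (hM0 : M 0 = 0) (hMnn : ∀ s : ℝ, 0 ≤ s → 0 ≤ M s)
    {v w l t : ℝ} (hv : orliczConj M v = t) (hw : orliczConj M w = l * t)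
    (hvnn : 0 ≤ v) (ht : 0 < t) (hl0 : 0 < l) (hl1 : l ≤ 1) : l * v ≤ w := by
  by_contra h
  push_neg at h
  have hlt : 0 < l * t := mul_pos hl0 ht
  -- every element of the set for l*v is ≤ l*t
  have hB : ∀ s : ℝ, 0 ≤ s → (l * v) * s - M s ≤ l * t := by
    intro s hs
    have h1 := conj_le hv (ne_of_gt ht) s hs
    nlinarith [hMnn s hs]
  have hk := conj_key hM0 hMnn hw hlt (le_of_lt h) hB
  have hwpos : 0 < w := starinv_pos hM0 hMnn hw hlt
  have h1 : 1 < l * v / w := (one_lt_div hwpos).2 h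
  nlinarith


/-- telescoping sum over Icc (ℓ+1) n -/
lemma telescope_Icc (f : ℕ → ℝ) (l n : ℕ) (h : l ≤ n) :
    ∑ i ∈ Icc (l + 1) n, (f (i - 1) - f i) = f l - f n := by
  induction n, h using Nat.le_induction with
  | base => simp
  | succ n hn ih =>
    rw [Finset.sum_Icc_succ_top (by omega : l + 1 ≤ n + 1), ih]
    simp

/-- MVT pointwise bound: `i^(-a) ≤ (i-1)^(1-a)/(a-1) - i^(1-a)/(a-1)` for `i ≥ 2`. -/
lemma pointwise_bound {a : ℝ} (ha : 1 < a) {i : ℕ} (hi : 2 ≤ i) :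
    (i : ℝ) ^ (-a) ≤ ((i - 1 : ℕ) : ℝ) ^ (1 - a) / (a - 1) - (i : ℝ) ^ (1 - a) / (a - 1) := by
  have hc : ((i - 1 : ℕ) : ℝ) = (i : ℝ) - 1 := by
    push_cast [Nat.cast_sub (by omega : 1 ≤ i)]; ring
  rw [hc]
  set c : ℝ := (i : ℝ) - 1 with hcdef
  have hc1 : 1 ≤ c := by
    have : (2 : ℝ) ≤ (i : ℝ) := by exact_mod_cast hi
    simp [hcdef]; linarith
  have hci : c < (i : ℝ) := by simp [hcdef]
  have hcpos : 0 < c := lt_of_lt_of_le one_pos hc1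
  -- MVT for f x = x ^ (1 - a) on [c, i]
  have hmvt := exists_hasDerivAt_eq_slope (fun x : ℝ => x ^ (1 - a))
      (fun x : ℝ => (1 - a) * x ^ (1 - a - 1)) hci
      (by
        apply ContinuousOn.rpow_const continuousOn_id
        intro x hx
        left
        have : 0 < x := lt_of_lt_of_le hcpos hx.1
        exact ne_of_gt this)
      (by
        intro x hx
        exact Real.hasDerivAt_rpow_const (Or.inl (ne_of_gt (lt_trans hcpos hx.1))))
  obtain ⟨ξ, hξ, hderiv⟩ := hmvt
  have hξpos : 0 < ξ := lt_trans hcpos hξ.1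
  -- (1-a) ξ^(-a) = (i^(1-a) - c^(1-a))/(i - c)
  have hic : (i : ℝ) - c = 1 := by simp [hcdef]
  rw [hic, div_one] at hderiv
  have hexp : 1 - a - 1 = -a := by ring
  rw [hexp] at hderiv
  -- so c^(1-a) - i^(1-a) = (a-1) ξ^(-a)
  have hkey : c ^ (1 - a) - (i : ℝ) ^ (1 - a) = (a - 1) * ξ ^ (-a) := by linarith [hderiv]
  -- ξ ≤ i so ξ^(-a) ≥ i^(-a)
  have hmono : (i : ℝ) ^ (-a) ≤ ξ ^ (-a) := by
    rw [Real.rpow_neg (le_of_lt hξpos), Real.rpow_neg (by positivity)]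
    apply inv_anti₀ (Real.rpow_pos_of_pos hξpos a)
    exact Real.rpow_le_rpow (le_of_lt hξpos) (le_of_lt hξ.2) (by linarith)
  have ha1 : 0 < a - 1 := by linarith
  rw [div_sub_div_same, hkey, mul_comm, mul_div_assoc, div_self (ne_of_gt ha1), mul_one]
  exact hmono

/-- tail sum bound: `∑_{i=ℓ+1}^n i^(-a) ≤ ℓ^(1-a)/(a-1)` -/
lemma tail_sum_bound {a : ℝ} (ha : 1 < a) {l n : ℕ} (hl : 1 ≤ l) (hln : l ≤ n) :
    ∑ i ∈ Icc (l + 1) n, (i : ℝ) ^ (-a) ≤ (l : ℝ) ^ (1 - a) / (a - 1) := by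
  have h1 : ∑ i ∈ Icc (l + 1) n, (i : ℝ) ^ (-a)
      ≤ ∑ i ∈ Icc (l + 1) n, (((i - 1 : ℕ) : ℝ) ^ (1 - a) / (a - 1) - (i : ℝ) ^ (1 - a) / (a - 1)) := by
    apply Finset.sum_le_sum
    intro i hi
    rw [Finset.mem_Icc] at hi
    exact pointwise_bound ha (by omega)
  rw [telescope_Icc (fun i => (i : ℝ) ^ (1 - a) / (a - 1)) l n hln] at h1
  have h2 : 0 ≤ (n : ℝ) ^ (1 - a) / (a - 1) := by
    apply div_nonneg (Real.rpow_nonneg (Nat.cast_nonneg n) _) (by linarith)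
  linarith


lemma minv_grow {M : ℝ → ℝ} {peps : ℝ} (hpe : 0 < peps)
    (hsm : StrictMonoOn M (Set.Ici 0))
    (hAnti : AntitoneOn (fun t : ℝ => M t / t ^ peps) (Set.Ioi 0))
    {ua ub a b : ℝ} (hua : M ua = a) (hub : M ub = b)
    (huann : 0 ≤ ua) (hubnn : 0 ≤ ub) (huapos : 0 < ua)
    (ha : 0 < a) (hab : a ≤ b) :
    ua * (b / a) ^ ((1:ℝ) / peps) ≤ ub := by
  have hb : 0 < b := lt_of_lt_of_le ha hab
  have huaub : ua ≤ ub := by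
    by_contra h
    push_neg at h
    have := hsm (Set.mem_Ici.2 hubnn) (Set.mem_Ici.2 huann) h
    rw [hua, hub] at this; linarith
  have hubpos : 0 < ub := lt_of_lt_of_le huapos huaub
  have hq := hAnti (Set.mem_Ioi.2 huapos) (Set.mem_Ioi.2 hubpos) huaub
  simp only [hua, hub] at hq
  -- b / ub^peps ≤ a / ua^peps
  have hra : (0:ℝ) < ua ^ peps := Real.rpow_pos_of_pos huapos peps
  have hrb : (0:ℝ) < ub ^ peps := Real.rpow_pos_of_pos hubpos peps
  rw [div_le_div_iff₀ hrb hra] at hq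
  -- b * ua^peps ≤ a * ub^peps
  have h1 : ua ^ peps * (b / a) ≤ ub ^ peps := by
    rw [mul_div_assoc'] at *
    rw [div_le_iff₀ ha]
    nlinarith
  have h2 : (ua ^ peps * (b / a)) ^ ((1:ℝ)/peps) ≤ (ub ^ peps) ^ ((1:ℝ)/peps) :=
    Real.rpow_le_rpow (by positivity) h1 (by positivity)
  rwa [Real.mul_rpow (le_of_lt hra) (by positivity), one_div,
    Real.rpow_rpow_inv (le_of_lt huapos) (ne_of_gt hpe),
    Real.rpow_rpow_inv (le_of_lt hubpos) (ne_of_gt hpe), ← one_div] at h2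

set_option maxHeartbeats 1000000 in
theorem stmt_7 (p peps : ℝ) (hpe1 : 1 < peps) (hpe2 : peps < p) :
    ∃ C : ℝ, 0 < C ∧
      ∀ (M : ℝ → ℝ),
        M 0 = 0 →
        ConvexOn ℝ (Set.Ici 0) M →
        (∀ t : ℝ, 0 < t → 0 < M t) →
        StrictMonoOn M (Set.Ici 0) →
        ContinuousOn M (Set.Ici 0) →
        (∀ y : ℝ, 0 ≤ y → ∃ t : ℝ, 0 ≤ t ∧ M t = y) →
        Filter.Tendsto (fun t => M t / t) (nhdsWithin 0 (Set.Ioi 0)) (nhds 0) →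
        Filter.Tendsto (fun t => M t / t) Filter.atTop Filter.atTop →
        AntitoneOn (fun t : ℝ => M t / t ^ peps) (Set.Ioi 0) →
        ∀ (Minv : ℝ → ℝ), (∀ t : ℝ, 0 ≤ t → 0 ≤ Minv t ∧ M (Minv t) = t) →
        ∀ (Mstarinv : ℝ → ℝ),
          (∀ t : ℝ, 0 ≤ t → 0 ≤ Mstarinv t ∧ orliczConj M (Mstarinv t) = t) →
        ∀ (n : ℕ), 1 ≤ n →
        ∀ (d : ℕ → ℝ),
          (∀ ℓ ∈ Finset.Icc 1 n,
            Mstarinv ((ℓ : ℝ) / n) = (1 / (n : ℝ)) * ∑ i ∈ Finset.Icc 1 ℓ, d i) →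
        ∀ ℓ ∈ Finset.Icc 1 n,
          ((ℓ : ℝ) / n) ^ (1 - 1 / p) *
              ((1 / (n : ℝ)) * ∑ i ∈ Finset.Icc (ℓ + 1) n, (d i) ^ p) ^ (1 / p) ≤
            C * Mstarinv ((ℓ : ℝ) / n) := by
  have hp1 : 1 < p := lt_trans hpe1 hpe2
  have hppos : (0:ℝ) < p := lt_trans one_pos hp1
  set a : ℝ := p / peps with ha_def
  have ha1 : 1 < a := (one_lt_div (by linarith)).2 hpe2
  set K : ℝ := 1 / (a - 1) with hK_def
  have hKpos : 0 < K := by rw [hK_def]; apply div_pos one_pos; linarith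
  have hKp : 0 < K ^ ((1:ℝ)/p) := Real.rpow_pos_of_pos hKpos _
  refine ⟨2 * K ^ ((1:ℝ)/p), by linarith, ?_⟩
  intro M hM0 hconv hMpos hsm _hcont _hsurj _h0 _hinf hAnti Minv hMinv Mstarinv hMstarinv
    n hn d hd ℓ hℓ
  rw [Finset.mem_Icc] at hℓ
  obtain ⟨hℓ1, hℓn⟩ := hℓ
  have hnpos : (0:ℝ) < n := by exact_mod_cast lt_of_lt_of_le one_pos hn
  have hℓpos : (0:ℝ) < ℓ := by exact_mod_cast lt_of_lt_of_le one_pos hℓ1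
  have hMnn : ∀ s : ℝ, 0 ≤ s → 0 ≤ M s := by
    intro s hs
    rcases eq_or_lt_of_le hs with h | h
    · rw [← h, hM0]
    · exact le_of_lt (hMpos s h)
  set t : ℝ := (ℓ : ℝ) / n with ht_def
  have htpos : 0 < t := by positivity
  have htn : (ℓ:ℝ)/n ≤ 1 := by
    rw [div_le_one hnpos]; exact_mod_cast hℓn
  obtain ⟨hunn, huM⟩ := hMinv t (le_of_lt htpos)
  set u : ℝ := Minv t with hu_def
  have hupos : 0 < u := by
    rcases eq_or_lt_of_le hunn with h | h
    · exfalso; rw [← h] at huM; rw [hM0] at huM; linarith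
    · exact h
  obtain ⟨hynn, hyconj⟩ := hMstarinv t (le_of_lt htpos)
  set y : ℝ := Mstarinv t with hy_def
  -- pointwise bound on d i for i in Icc (ℓ+1) n
  have hpoint : ∀ i ∈ Icc (ℓ + 1) n, 0 ≤ d i ∧ d i ≤ (2 / u) * ((ℓ:ℝ)/i) ^ ((1:ℝ)/peps) := by
    intro i hi
    rw [Finset.mem_Icc] at hi
    obtain ⟨hi1, hin⟩ := hi
    have hi2 : 2 ≤ i := by omega
    have hipos : (0:ℝ) < i := by exact_mod_cast (by omega : 0 < i)
    have hi1R : (1:ℝ) ≤ (i:ℝ) - 1 := by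
      have : (2:ℝ) ≤ (i:ℝ) := by exact_mod_cast hi2
      linarith
    -- the increments
    have hmemi : i ∈ Finset.Icc 1 n := Finset.mem_Icc.2 ⟨by omega, hin⟩
    have hmemi1 : i - 1 ∈ Finset.Icc 1 n := Finset.mem_Icc.2 ⟨by omega, by omega⟩
    have hdi := hd i hmemi
    have hdi1 := hd (i - 1) hmemi1
    have hcast : ((i - 1 : ℕ) : ℝ) = (i:ℝ) - 1 := by
      push_cast [Nat.cast_sub (by omega : 1 ≤ i)]; ring
    set ti : ℝ := (i:ℝ)/n with hti_def
    set ti1 : ℝ := ((i:ℝ) - 1)/n with hti1_def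
    have htipos : 0 < ti := by positivity
    have hti1pos : 0 < ti1 := by rw [hti1_def]; positivity
    -- d i = n * (v i - v (i-1))
    have hsum : ∑ j ∈ Icc 1 i, d j = ∑ j ∈ Icc 1 (i-1), d j + d i := by
      have h := Finset.sum_Icc_succ_top (by omega : 1 ≤ (i-1)+1) d
      rw [show (i-1)+1 = i from by omega] at h
      exact h
    have hdi_eq : d i = (n:ℝ) * (Mstarinv ti - Mstarinv ti1) := by
      rw [hti_def, hti1_def, ← hcast, hdi, hdi1, hsum]
      field_simp
      ring
    obtain ⟨hvinn, hviconj⟩ := hMstarinv ti (le_of_lt htipos)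
    obtain ⟨hvi1nn, hvi1conj⟩ := hMstarinv ti1 (le_of_lt hti1pos)
    obtain ⟨huinn, huiM⟩ := hMinv ti (le_of_lt htipos)
    have huipos : 0 < Minv ti := by
      rcases eq_or_lt_of_le huinn with h | h
      · exfalso; rw [← h] at huiM; rw [hM0] at huiM; linarith
      · exact h
    -- d i ≥ 0
    have hmono : Mstarinv ti1 ≤ Mstarinv ti := by
      apply starinv_mono hM0 hMnn hvi1conj hviconj hti1pos
      rw [hti_def, hti1_def]
      gcongr
      linarith
    have hd_nonneg : 0 ≤ d i := by
      rw [hdi_eq]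
      apply mul_nonneg (le_of_lt hnpos)
      linarith
    -- concavity bound: Mstarinv ti1 ≥ ((i-1)/i) Mstarinv ti
    have hconc : (((i:ℝ) - 1)/i) * Mstarinv ti ≤ Mstarinv ti1 := by
      apply starinv_concave hM0 hMnn hviconj
        (by rw [hvi1conj, hti1_def, hti_def]; field_simp) hvinn htipos
        (by apply div_pos <;> linarith) (by rw [div_le_one hipos]; linarith)
    -- Fact 1 : Mstarinv ti ≤ 2 ti / Minv ti
    have hfact1 : Mstarinv ti ≤ 2 * ti / Minv ti := starinv_le hviconj huiM huipos htipos
    -- d i ≤ 2 / Minv ti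
    have hd_le : d i ≤ 2 / Minv ti := by
      rw [hdi_eq]
      have h1 : Mstarinv ti - Mstarinv ti1 ≤ (1/(i:ℝ)) * Mstarinv ti := by
        have : Mstarinv ti - (((i:ℝ) - 1)/i) * Mstarinv ti = (1/(i:ℝ)) * Mstarinv ti := by
          field_simp; ring
        linarith
      calc (n:ℝ) * (Mstarinv ti - Mstarinv ti1) ≤ (n:ℝ) * ((1/(i:ℝ)) * Mstarinv ti) :=
            mul_le_mul_of_nonneg_left h1 (le_of_lt hnpos)
        _ ≤ (n:ℝ) * ((1/(i:ℝ)) * (2 * ti / Minv ti)) := by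
            apply mul_le_mul_of_nonneg_left _ (le_of_lt hnpos)
            exact mul_le_mul_of_nonneg_left hfact1 (by positivity)
        _ = 2 / Minv ti := by
            rw [hti_def]; field_simp
    -- growth of Minv : Minv ti ≥ u * (i/ℓ)^(1/peps)
    have hgrow : u * ((i:ℝ)/(ℓ:ℝ)) ^ ((1:ℝ)/peps) ≤ Minv ti := by
      have hratio : ti / t = (i:ℝ)/(ℓ:ℝ) := by
        rw [hti_def, ht_def]; field_simp
      have := minv_grow (by linarith : (0:ℝ) < peps) hsm hAnti huM huiM hunn huinn hupos
        htpos (by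
          rw [ht_def, hti_def]
          gcongr
          exact_mod_cast (by omega : ℓ ≤ i))
      rwa [hratio] at this
    refine ⟨hd_nonneg, ?_⟩
    have hwpos : (0:ℝ) < ((i:ℝ)/(ℓ:ℝ)) ^ ((1:ℝ)/peps) := Real.rpow_pos_of_pos (by positivity) _
    have huw : (0:ℝ) < u * ((i:ℝ)/(ℓ:ℝ)) ^ ((1:ℝ)/peps) := mul_pos hupos hwpos
    have h2 : 2 / Minv ti ≤ 2 / (u * ((i:ℝ)/(ℓ:ℝ)) ^ ((1:ℝ)/peps)) := by
      rw [div_le_div_iff₀ huipos huw]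
      linarith [hgrow]
    have h3 : 2 / (u * ((i:ℝ)/(ℓ:ℝ)) ^ ((1:ℝ)/peps)) = (2/u) * ((ℓ:ℝ)/(i:ℝ)) ^ ((1:ℝ)/peps) := by
      rw [show (ℓ:ℝ)/(i:ℝ) = ((i:ℝ)/(ℓ:ℝ))⁻¹ by rw [inv_div],
        Real.inv_rpow (by positivity), div_mul_eq_div_div, div_eq_mul_inv]
    linarith [hd_le, h3 ▸ h2]
  -- bound the sum
  have h2unn : (0:ℝ) ≤ 2 / u := div_nonneg (by norm_num) hunn
  have hsum_bound : ∑ i ∈ Icc (ℓ+1) n, d i ^ p ≤ (2/u)^p * ((ℓ:ℝ) * K) := by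
    have hterm : ∀ i ∈ Icc (ℓ+1) n, d i ^ p ≤ (2/u)^p * ((ℓ:ℝ)^a * (i:ℝ)^(-a)) := by
      intro i hi
      obtain ⟨hdnn, hdle⟩ := hpoint i hi
      rw [Finset.mem_Icc] at hi
      have hipos : (0:ℝ) < i := by exact_mod_cast (by omega : 0 < i)
      have h1 : d i ^ p ≤ ((2/u) * ((ℓ:ℝ)/i) ^ ((1:ℝ)/peps)) ^ p :=
        Real.rpow_le_rpow hdnn hdle (le_of_lt hppos)
      have h2 : ((2/u) * ((ℓ:ℝ)/i) ^ ((1:ℝ)/peps)) ^ p = (2/u)^p * ((ℓ:ℝ)/i)^a := by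
        rw [Real.mul_rpow h2unn (Real.rpow_nonneg (by positivity) _),
          ← Real.rpow_mul (by positivity : (0:ℝ) ≤ (ℓ:ℝ)/i),
          show (1:ℝ)/peps * p = a from by rw [ha_def]; ring]
      have h3 : ((ℓ:ℝ)/i)^a = (ℓ:ℝ)^a * (i:ℝ)^(-a) := by
        rw [Real.div_rpow (le_of_lt hℓpos) (le_of_lt hipos),
          Real.rpow_neg (le_of_lt hipos), div_eq_mul_inv]
      rw [h2, h3] at h1
      exact h1
    calc ∑ i ∈ Icc (ℓ+1) n, d i ^ p
        ≤ ∑ i ∈ Icc (ℓ+1) n, (2/u)^p * ((ℓ:ℝ)^a * (i:ℝ)^(-a)) := Finset.sum_le_sum hterm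
      _ = (2/u)^p * ((ℓ:ℝ)^a * ∑ i ∈ Icc (ℓ+1) n, (i:ℝ)^(-a)) := by
          rw [← Finset.mul_sum, ← Finset.mul_sum]
      _ ≤ (2/u)^p * ((ℓ:ℝ)^a * ((ℓ:ℝ)^(1-a)/(a-1))) := by
          apply mul_le_mul_of_nonneg_left _ (Real.rpow_nonneg h2unn p)
          exact mul_le_mul_of_nonneg_left (tail_sum_bound ha1 hℓ1 hℓn)
            (Real.rpow_nonneg (le_of_lt hℓpos) a)
      _ = (2/u)^p * ((ℓ:ℝ) * K) := by
          congr 1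
          rw [← mul_div_assoc, ← Real.rpow_add hℓpos, show a + (1-a) = (1:ℝ) from by ring,
            Real.rpow_one, hK_def, mul_one_div]
  have hSnn : (0:ℝ) ≤ ∑ i ∈ Icc (ℓ+1) n, d i ^ p :=
    Finset.sum_nonneg fun i hi => Real.rpow_nonneg (hpoint i hi).1 p
  have hS2 : (1/(n:ℝ)) * ∑ i ∈ Icc (ℓ+1) n, d i ^ p ≤ (2/u)^p * (t * K) := by
    have h1 := mul_le_mul_of_nonneg_left hsum_bound
      (le_of_lt (by positivity : (0:ℝ) < 1/(n:ℝ)))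
    calc (1/(n:ℝ)) * ∑ i ∈ Icc (ℓ+1) n, d i ^ p
        ≤ (1/(n:ℝ)) * ((2/u)^p * ((ℓ:ℝ) * K)) := h1
      _ = (2/u)^p * (t * K) := by rw [ht_def]; ring
  have hS2nn : (0:ℝ) ≤ (1/(n:ℝ)) * ∑ i ∈ Icc (ℓ+1) n, d i ^ p :=
    mul_nonneg (by positivity) hSnn
  have hS3 : ((1/(n:ℝ)) * ∑ i ∈ Icc (ℓ+1) n, d i ^ p) ^ ((1:ℝ)/p)
      ≤ (2/u) * (t ^ ((1:ℝ)/p) * K ^ ((1:ℝ)/p)) := by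
    calc ((1/(n:ℝ)) * ∑ i ∈ Icc (ℓ+1) n, d i ^ p) ^ ((1:ℝ)/p)
        ≤ ((2/u)^p * (t * K)) ^ ((1:ℝ)/p) :=
          Real.rpow_le_rpow hS2nn hS2 (by positivity)
      _ = (2/u) * (t ^ ((1:ℝ)/p) * K ^ ((1:ℝ)/p)) := by
          rw [Real.mul_rpow (Real.rpow_nonneg h2unn p)
              (mul_nonneg (le_of_lt htpos) (le_of_lt hKpos)),
            Real.mul_rpow (le_of_lt htpos) (le_of_lt hKpos), one_div,
            Real.rpow_rpow_inv h2unn (ne_of_gt hppos), ← one_div]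
  have hLnn : (0:ℝ) ≤ t ^ (1 - 1/p) := Real.rpow_nonneg (le_of_lt htpos) _
  have hfinal : t / u ≤ y := starinv_ge hM0 hMnn hconv hyconj hynn huM hupos htpos
  calc t ^ (1 - 1/p) * ((1/(n:ℝ)) * ∑ i ∈ Icc (ℓ+1) n, d i ^ p) ^ (1/p)
      ≤ t ^ (1 - 1/p) * ((2/u) * (t ^ ((1:ℝ)/p) * K ^ ((1:ℝ)/p))) :=
        mul_le_mul_of_nonneg_left hS3 hLnn
    _ = 2 * K ^ ((1:ℝ)/p) * (t ^ (1 - 1/p) * t ^ ((1:ℝ)/p)) / u := by ring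
    _ = 2 * K ^ ((1:ℝ)/p) * (t / u) := by
        rw [← Real.rpow_add htpos, show (1 - 1/p) + (1:ℝ)/p = 1 from by ring,
          Real.rpow_one, mul_div_assoc]
    _ ≤ 2 * K ^ ((1:ℝ)/p) * y :=
        mul_le_mul_of_nonneg_left hfinal (by linarith)
end

section
/- Let p ∈ (1,∞), n ∈ ℕ, and let a_1 ≥ … ≥ a_n > 0 satisfy ∑_{i=k+1}^n a_i/i^{1/p} ≤ C·a_k·k^{1−1/p} for every k = 1,…,n, where C is a constant. Then for every Orlicz function M and every x ∈ ℝ^n, ‖(a_k ((1/k)∑_{i=1}^k (x_i*)^p)^{1/p})_{k=1}^n‖_M ≤ C'·‖(a_k x_k*)_{k=1}^n‖_M, where C' depends only on C. -/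
open Finset

/-- The Luxemburg norm of the vector `(y 1, …, y n)` with respect to the Orlicz function `M`. -/
noncomputable def luxNorm (M : ℝ → ℝ) (n : ℕ) (y : ℕ → ℝ) : ℝ :=
  sInf {ρ : ℝ | 0 < ρ ∧ ∑ k ∈ Finset.Icc 1 n, M (|y k| / ρ) ≤ 1}

/-- The increment of `t ↦ t^(1/p)` at the integer `i`. -/
noncomputable def wfun (p : ℝ) (i : ℕ) : ℝ := (i:ℝ) ^ (1/p) - ((i:ℝ) - 1) ^ (1/p)

lemma aux_mono (p : ℝ) (hp : 1 ≤ p) (d : ℝ) (hd : 0 ≤ d) :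
    MonotoneOn (fun u : ℝ => (u + d) ^ p - u ^ p) (Set.Ici 0) := by
  have hc : ∀ q : ℝ, 1 ≤ q → Continuous fun u : ℝ => u ^ q := by
    intro q hq
    rw [continuous_iff_continuousAt]
    intro u
    exact Real.continuousAt_rpow_const u q (Or.inr (by linarith))
  apply monotoneOn_of_deriv_nonneg (convex_Ici 0)
  · exact (((hc p hp).comp (continuous_add_right d)).sub (hc p hp)).continuousOn
  · intro u hu
    rw [interior_Ici] at hu
    have h1 : HasDerivAt (fun u : ℝ => (u + d) ^ p) (p * (u + d) ^ (p - 1) * 1) u := by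
      exact (Real.hasDerivAt_rpow_const (Or.inr hp)).comp u ((hasDerivAt_id u).add_const d)
    have h2 : HasDerivAt (fun u : ℝ => u ^ p) (p * u ^ (p - 1)) u :=
      Real.hasDerivAt_rpow_const (Or.inr hp)
    exact (h1.sub h2).differentiableAt.differentiableWithinAt
  · intro u hu
    rw [interior_Ici] at hu
    have hu0 : (0:ℝ) < u := hu
    have h1 : HasDerivAt (fun u : ℝ => (u + d) ^ p) (p * (u + d) ^ (p - 1) * 1) u :=
      (Real.hasDerivAt_rpow_const (Or.inr hp)).comp u ((hasDerivAt_id u).add_const d)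
    have h2 : HasDerivAt (fun u : ℝ => u ^ p) (p * u ^ (p - 1)) u :=
      Real.hasDerivAt_rpow_const (Or.inr hp)
    rw [show deriv (fun u : ℝ => (u + d) ^ p - u ^ p) u = _ from (h1.sub h2).deriv]
    have : u ^ (p - 1) ≤ (u + d) ^ (p - 1) :=
      Real.rpow_le_rpow (le_of_lt hu0) (by linarith) (by linarith)
    nlinarith

lemma lp_le (p : ℝ) (hp : 1 < p) (k : ℕ) (xs : ℕ → ℝ)
    (hmono : ∀ i j, 1 ≤ i → i ≤ j → j ≤ k → xs j ≤ xs i)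
    (hpos : ∀ i ∈ Icc 1 k, 0 ≤ xs i) :
    (∑ i ∈ Icc 1 k, xs i ^ p) ^ (1/p) ≤ ∑ i ∈ Icc 1 k, xs i * wfun p i := by
  have hp0 : (0:ℝ) < p := by linarith
  have hp0' : 1/p ≠ 0 := by positivity
  unfold wfun
  induction k with
  | zero =>
    rw [show Icc 1 0 = (∅ : Finset ℕ) by rfl, Finset.sum_empty, Finset.sum_empty,
      Real.zero_rpow hp0']
  | succ k ih =>
    have hmono' : ∀ i j, 1 ≤ i → i ≤ j → j ≤ k → xs j ≤ xs i :=
      fun i j h1 h2 h3 => hmono i j h1 h2 (by omega)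
    have hpos' : ∀ i ∈ Icc 1 k, 0 ≤ xs i := by
      intro i hi; apply hpos; simp only [mem_Icc] at *; omega
    have IH := ih hmono' hpos'
    rw [Finset.sum_Icc_succ_top (by omega : 1 ≤ k + 1),
        Finset.sum_Icc_succ_top (by omega : 1 ≤ k + 1)]
    set S := ∑ i ∈ Icc 1 k, xs i ^ p with hSdef
    set c := xs (k+1) with hcdef
    have hc : 0 ≤ c := hpos (k+1) (by simp)
    have hS0 : 0 ≤ S := Finset.sum_nonneg fun i hi =>
      Real.rpow_nonneg (hpos' i hi) p
    have hkS : (k:ℝ) * c ^ p ≤ S := by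
      calc (k:ℝ) * c ^ p = ∑ i ∈ Icc 1 k, c ^ p := by
            rw [Finset.sum_const, Nat.card_Icc]; simp [nsmul_eq_mul]
        _ ≤ S := Finset.sum_le_sum fun i hi => by
            have hi' := Finset.mem_Icc.mp hi
            exact Real.rpow_le_rpow hc (hmono i (k+1) hi'.1 (by omega) le_rfl) hp0.le
    set w : ℝ := ((k:ℝ)+1) ^ (1/p) - (k:ℝ) ^ (1/p) with hwdef
    have hw : 0 ≤ w := sub_nonneg.mpr (Real.rpow_le_rpow (by positivity)
      (by linarith : (k:ℝ) ≤ (k:ℝ)+1) (by positivity))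
    have key : (S + c ^ p) ^ (1/p) ≤ S ^ (1/p) + c * w := by
      set u := S ^ (1/p) with hudef
      set v := c * (k:ℝ) ^ (1/p) with hvdef
      have hu0 : 0 ≤ u := Real.rpow_nonneg hS0 _
      have hv0 : 0 ≤ v := by positivity
      have hvu : v ≤ u := by
        have : ((k:ℝ) * c ^ p) ^ (1/p) ≤ u := Real.rpow_le_rpow (by positivity) hkS (by positivity)
        calc v = ((k:ℝ) * c ^ p) ^ (1/p) := by
              rw [Real.mul_rpow (by positivity) (by positivity),
                ← Real.rpow_mul hc, mul_one_div_cancel hp0.ne', Real.rpow_one]; ring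
          _ ≤ u := this
      have hm := aux_mono p hp.le (c * w) (by positivity) (Set.mem_Ici.mpr hv0)
        (Set.mem_Ici.mpr hu0) hvu
      have hup : u ^ p = S := by
        rw [hudef, ← Real.rpow_mul hS0, one_div_mul_cancel hp0.ne', Real.rpow_one]
      have hvp : v ^ p = c ^ p * (k:ℝ) := by
        rw [hvdef, Real.mul_rpow hc (by positivity), ← Real.rpow_mul (by positivity),
          one_div_mul_cancel hp0.ne', Real.rpow_one]
      have hvcw : (v + c * w) ^ p = c ^ p * ((k:ℝ)+1) := by
        have : v + c * w = c * (((k:ℝ)+1) ^ (1/p)) := by rw [hvdef, hwdef]; ring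
        rw [this, Real.mul_rpow hc (by positivity), ← Real.rpow_mul (by positivity),
          one_div_mul_cancel hp0.ne', Real.rpow_one]
      have hbig : S + c ^ p ≤ (u + c * w) ^ p := by
        simp only at hm
        rw [hup, hvcw, hvp] at hm; nlinarith
      calc (S + c ^ p) ^ (1/p) ≤ ((u + c * w) ^ p) ^ (1/p) :=
            Real.rpow_le_rpow (by positivity) hbig (by positivity)
        _ = u + c * w := by
            rw [← Real.rpow_mul (by positivity), mul_one_div_cancel hp0.ne', Real.rpow_one]
    have : ((k+1:ℕ):ℝ) ^ (1/p) - (((k+1:ℕ):ℝ) - 1) ^ (1/p) = w := by push_cast; rw [hwdef]; ring_nf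
    rw [this]
    calc (S + c ^ p) ^ (1/p) ≤ S ^ (1/p) + c * w := key
      _ ≤ (∑ i ∈ Icc 1 k, xs i * ((i:ℝ) ^ (1/p) - ((i:ℝ) - 1) ^ (1/p))) + c * w := by
          linarith

lemma jensen_aux (M : ℝ → ℝ) (hM0 : M 0 = 0) (hconv : ConvexOn ℝ (Set.Ici 0) M)
    (t : Finset ℕ) (w z : ℕ → ℝ) (hw : ∀ i ∈ t, 0 ≤ w i) (hw1 : ∑ i ∈ t, w i ≤ 1)
    (hz : ∀ i ∈ t, 0 ≤ z i) :
    M (∑ i ∈ t, w i * z i) ≤ ∑ i ∈ t, w i * M (z i) := by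
  set T := ∑ i ∈ t, w i with hT
  have hT0 : 0 ≤ T := Finset.sum_nonneg hw
  rcases eq_or_lt_of_le hT0 with h0 | hTpos
  · have hz0 : ∀ i ∈ t, w i = 0 := by
      intro i hi
      exact (Finset.sum_eq_zero_iff_of_nonneg hw).mp h0.symm i hi
    rw [Finset.sum_eq_zero fun i hi => by rw [hz0 i hi, zero_mul],
      Finset.sum_eq_zero fun i hi => by rw [hz0 i hi, zero_mul], hM0]
  · set A := ∑ i ∈ t, (w i / T) * z i with hA
    have hA0 : 0 ≤ A := Finset.sum_nonneg fun i hi => by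
      have := hw i hi; have := hz i hi; positivity
    have hsum1 : ∑ i ∈ t, w i / T = 1 := by
      rw [← Finset.sum_div, ← hT, div_self hTpos.ne']
    have jensen : M (∑ i ∈ t, (w i / T) • z i) ≤ ∑ i ∈ t, (w i / T) * M (z i) :=
      hconv.map_sum_le (fun i hi => by have := hw i hi; positivity) hsum1
        (fun i hi => Set.mem_Ici.mpr (hz i hi))
    have hTA : ∑ i ∈ t, w i * z i = T • A + (1 - T) • (0:ℝ) := by
      simp only [smul_eq_mul, mul_zero, add_zero, hA, Finset.mul_sum]
      exact Finset.sum_congr rfl fun i hi => by field_simp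
    have two := hconv.2 (Set.mem_Ici.mpr hA0) (Set.mem_Ici.mpr (le_refl (0:ℝ)))
      (show (0:ℝ) ≤ T from hT0) (show (0:ℝ) ≤ 1 - T by linarith)
      (show T + (1 - T) = 1 by ring)
    rw [hTA]
    calc M (T • A + (1 - T) • (0:ℝ)) ≤ T * M A + (1 - T) * M 0 := two
      _ = T * M A := by rw [hM0]; ring
      _ ≤ T * ∑ i ∈ t, (w i / T) * M (z i) := by
          apply mul_le_mul_of_nonneg_left _ hT0
          simpa only [smul_eq_mul] using jensen
      _ = ∑ i ∈ t, w i * M (z i) := by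
          rw [Finset.mul_sum]
          exact Finset.sum_congr rfl fun i hi => by field_simp

lemma w_le (p : ℝ) (hp : 1 < p) (i : ℕ) (hi : 1 ≤ i) :
    wfun p i ≤ (i:ℝ) ^ (1/p - 1) := by
  unfold wfun
  have hi0 : (0:ℝ) < i := by exact_mod_cast hi
  have hp0 : (0:ℝ) < p := by linarith
  have hfrac : ((i:ℝ) - 1) / i ≤ (((i:ℝ) - 1) / i) ^ (1/p) := by
    rcases eq_or_lt_of_le (by exact_mod_cast hi : (1:ℕ) ≤ i) with h | h
    · rw [← Nat.cast_one, ← h]; norm_num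
      exact Real.rpow_nonneg le_rfl _
    · have hx0 : (0:ℝ) < ((i:ℝ) - 1) / i := by
        have : (1:ℝ) < i := by exact_mod_cast h
        have : (0:ℝ) < (i:ℝ) - 1 := by linarith
        positivity
      have hx1 : ((i:ℝ) - 1) / i ≤ 1 := by
        rw [div_le_one hi0]; linarith
      have := Real.rpow_le_rpow_of_exponent_ge hx0 hx1
        (by rw [div_le_one hp0]; linarith : 1/p ≤ 1)
      simpa using this
  have him1 : (0:ℝ) ≤ (i:ℝ) - 1 := by
    have : (1:ℝ) ≤ i := by exact_mod_cast hi
    linarith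
  have hkey : ((i:ℝ) - 1) ^ (1/p) = (i:ℝ) ^ (1/p) * (((i:ℝ) - 1) / i) ^ (1/p) := by
    rw [← Real.mul_rpow hi0.le (by positivity)]
    congr 1; field_simp
  have hsplit : (i:ℝ) ^ (1/p - 1) = (i:ℝ) ^ (1/p) / i := by
    rw [Real.rpow_sub hi0, Real.rpow_one]
  rw [hkey, hsplit]
  have h1 : (i:ℝ) ^ (1/p) * (((i:ℝ) - 1) / i) ≤ (i:ℝ) ^ (1/p) * (((i:ℝ) - 1) / i) ^ (1/p) :=
    mul_le_mul_of_nonneg_left hfrac (by positivity)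
  have h2 : (i:ℝ) ^ (1/p) - (i:ℝ) ^ (1/p) * (((i:ℝ) - 1) / i) = (i:ℝ) ^ (1/p) / i := by
    field_simp; ring
  linarith

lemma telescope (p : ℝ) (hp : 1 < p) (k : ℕ) :
    ∑ i ∈ Icc 1 k, wfun p i = (k:ℝ) ^ (1/p) := by
  have hp0 : 1/p ≠ 0 := by positivity
  unfold wfun
  induction k with
  | zero =>
    rw [show Icc 1 0 = (∅ : Finset ℕ) by rfl, Finset.sum_empty, Nat.cast_zero,
      Real.zero_rpow hp0]
  | succ k ih =>
    rw [Finset.sum_Icc_succ_top (by omega : 1 ≤ k + 1), ih]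
    push_cast
    ring

lemma lux_nonempty (M : ℝ → ℝ) (hM0 : M 0 = 0) (hconv : ConvexOn ℝ (Set.Ici 0) M)
    (hM1 : 0 ≤ M 1) (n : ℕ) (y : ℕ → ℝ) :
    ∃ ρ : ℝ, 0 < ρ ∧ ∑ k ∈ Icc 1 n, M (|y k| / ρ) ≤ 1 := by
  rcases Nat.eq_zero_or_pos n with rfl | hn
  · exact ⟨1, one_pos, by simp⟩
  have hn1 : (1:ℝ) ≤ (n:ℝ) := by exact_mod_cast hn
  have hMlin : ∀ t : ℝ, 0 ≤ t → t ≤ 1 → M t ≤ t * M 1 := by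
    intro t ht ht1
    have := hconv.2 (Set.mem_Ici.mpr (le_refl (0:ℝ)))
      (Set.mem_Ici.mpr (zero_le_one)) (show (0:ℝ) ≤ 1 - t by linarith) ht
      (show (1 - t) + t = 1 by ring)
    simp only [smul_eq_mul, mul_zero, mul_one, zero_add, hM0] at this
    linarith
  set B := ∑ k ∈ Icc 1 n, |y k| with hB
  have hB0 : 0 ≤ B := Finset.sum_nonneg fun k _ => abs_nonneg _
  set ρ : ℝ := (1 + B) * (1 + n * M 1) with hρdef
  have hfac : (1:ℝ) ≤ 1 + n * M 1 := by
    have : (0:ℝ) ≤ (n:ℝ) * M 1 := by positivity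
    linarith
  have hρ : 0 < ρ := by nlinarith
  refine ⟨ρ, hρ, ?_⟩
  have hterm : ∀ k ∈ Icc 1 n, M (|y k| / ρ) ≤ (|y k| / ρ) * M 1 := by
    intro k hk
    apply hMlin _ (by positivity)
    rw [div_le_one hρ]
    have h1 : |y k| ≤ B := Finset.single_le_sum (fun i _ => abs_nonneg (y i)) hk
    nlinarith
  calc ∑ k ∈ Icc 1 n, M (|y k| / ρ) ≤ ∑ k ∈ Icc 1 n, (|y k| / ρ) * M 1 :=
        Finset.sum_le_sum hterm
    _ = (B / ρ) * M 1 := by rw [← Finset.sum_mul, ← Finset.sum_div]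
    _ ≤ 1 := by
        rw [div_mul_eq_mul_div, div_le_one hρ]
        nlinarith [mul_nonneg (mul_nonneg hB0 hM1) (by linarith : (0:ℝ) ≤ (n:ℝ) - 1)]

lemma lux_le (M : ℝ → ℝ) (n : ℕ) (y z : ℕ → ℝ) (C' : ℝ) (hC' : 0 < C')
    (hne : ∃ ρ : ℝ, 0 < ρ ∧ ∑ k ∈ Icc 1 n, M (|z k| / ρ) ≤ 1)
    (key : ∀ ρ : ℝ, 0 < ρ → ∑ k ∈ Icc 1 n, M (|z k| / ρ) ≤ 1 →
      ∑ k ∈ Icc 1 n, M (|y k| / (C' * ρ)) ≤ 1) :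
    luxNorm M n y ≤ C' * luxNorm M n z := by
  rw [luxNorm, luxNorm]
  have hbdd : BddBelow {ρ : ℝ | 0 < ρ ∧ ∑ k ∈ Icc 1 n, M (|y k| / ρ) ≤ 1} :=
    ⟨0, fun ρ hρ => le_of_lt hρ.1⟩
  have h2 : ∀ ρ ∈ {ρ : ℝ | 0 < ρ ∧ ∑ k ∈ Icc 1 n, M (|z k| / ρ) ≤ 1},
      sInf {ρ : ℝ | 0 < ρ ∧ ∑ k ∈ Icc 1 n, M (|y k| / ρ) ≤ 1} / C' ≤ ρ := by
    intro ρ hρ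
    obtain ⟨hρ0, hρ1⟩ := hρ
    rw [div_le_iff₀ hC', mul_comm]
    exact csInf_le hbdd ⟨by positivity, key ρ hρ0 hρ1⟩
  rw [← div_le_iff₀' hC']
  exact le_csInf hne h2

theorem stmt_11 (C : ℝ) (hC : 0 < C) :
    ∃ C' : ℝ, 0 < C' ∧
      ∀ (p : ℝ), 1 < p →
      ∀ (n : ℕ) (a : ℕ → ℝ),
        (∀ i j, 1 ≤ i → i ≤ j → j ≤ n → a j ≤ a i) →
        (∀ i ∈ Finset.Icc 1 n, 0 < a i) →
        (∀ k, 1 ≤ k → k ≤ n →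
          ∑ i ∈ Finset.Icc (k + 1) n, a i / (i : ℝ) ^ (1 / p) ≤
            C * a k * (k : ℝ) ^ (1 - 1 / p)) →
      ∀ (M : ℝ → ℝ),
        M 0 = 0 → ConvexOn ℝ (Set.Ici 0) M → (∀ t : ℝ, 0 < t → 0 < M t) →
        StrictMonoOn M (Set.Ici 0) → (∀ y : ℝ, 0 ≤ y → ∃ t : ℝ, 0 ≤ t ∧ M t = y) →
      ∀ (x xs : ℕ → ℝ),
        (∀ i j, 1 ≤ i → i ≤ j → j ≤ n → xs j ≤ xs i) →
        (∃ σ : Equiv.Perm ℕ, (∀ i ∈ Finset.Icc 1 n, σ i ∈ Finset.Icc 1 n) ∧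
          ∀ i ∈ Finset.Icc 1 n, xs i = |x (σ i)|) →
        luxNorm M n
            (fun k => a k * ((1 / (k : ℝ)) * ∑ i ∈ Finset.Icc 1 k, (xs i) ^ p) ^ (1 / p)) ≤
          C' * luxNorm M n (fun k => a k * xs k) := by
  refine ⟨1 + C, by linarith, ?_⟩
  intro p hp n a hamono hapos hasum M hM0 hconv hMpos hMmono hMsurj x xs hxsmono hperm
  obtain ⟨σ, hσ, hxs⟩ := hperm
  have hxs0 : ∀ i ∈ Icc 1 n, 0 ≤ xs i := fun i hi => (hxs i hi) ▸ abs_nonneg _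
  have hp0 : (0:ℝ) < p := by linarith
  have hC' : (0:ℝ) < 1 + C := by linarith
  have hM1 : 0 ≤ M 1 := (hMpos 1 one_pos).le
  have hMnn : ∀ t : ℝ, 0 ≤ t → 0 ≤ M t := by
    intro t ht
    rcases eq_or_lt_of_le ht with h | h
    · rw [← h, hM0]
    · exact (hMpos t h).le
  apply lux_le M n _ _ (1 + C) hC' (lux_nonempty M hM0 hconv hM1 n _)
  intro ρ hρ hρ1
  -- weights
  have hw0 : ∀ i : ℕ, 1 ≤ i → 0 ≤ wfun p i := by
    intro i hi
    have h1 : (0:ℝ) ≤ (i:ℝ) - 1 := by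
      have : (1:ℝ) ≤ (i:ℝ) := by exact_mod_cast hi
      linarith
    exact sub_nonneg.mpr (Real.rpow_le_rpow h1 (by linarith) (by positivity))
  set W : ℕ → ℕ → ℝ :=
    fun k i => a k * wfun p i / (a i * (k:ℝ) ^ (1/p) * (1 + C)) with hWdef
  have hW0 : ∀ k i : ℕ, k ∈ Icc 1 n → i ∈ Icc 1 k → 0 ≤ W k i := by
    intro k i hk hi
    obtain ⟨hk1, hkn⟩ := Finset.mem_Icc.mp hk
    obtain ⟨hi1, hik⟩ := Finset.mem_Icc.mp hi
    have hak := hapos k hk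
    have hai := hapos i (Finset.mem_Icc.mpr ⟨hi1, le_trans hik hkn⟩)
    have hwi := hw0 i hi1
    have hk0 : (0:ℝ) < (k:ℝ) := by exact_mod_cast hk1
    have hkp : (0:ℝ) < (k:ℝ) ^ (1/p) := Real.rpow_pos_of_pos hk0 _
    rw [hWdef]
    positivity
  -- row sums
  have hrow : ∀ k ∈ Icc 1 n, ∑ i ∈ Icc 1 k, W k i ≤ 1 := by
    intro k hk
    obtain ⟨hk1, hkn⟩ := Finset.mem_Icc.mp hk
    have hk0 : (0:ℝ) < (k:ℝ) := by exact_mod_cast hk1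
    have hkp : (0:ℝ) < (k:ℝ) ^ (1/p) := Real.rpow_pos_of_pos hk0 _
    have hterm : ∀ i ∈ Icc 1 k, W k i ≤ wfun p i / ((k:ℝ) ^ (1/p) * (1 + C)) := by
      intro i hi
      obtain ⟨hi1, hik⟩ := Finset.mem_Icc.mp hi
      have hai := hapos i (Finset.mem_Icc.mpr ⟨hi1, le_trans hik hkn⟩)
      have hak := hapos k hk
      have haki : a k ≤ a i := hamono i k hi1 hik hkn
      have hwi := hw0 i hi1
      rw [hWdef]
      simp only
      rw [div_le_div_iff₀ (by positivity) (by positivity)]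
      nlinarith [mul_pos hkp hC', mul_nonneg hwi (mul_pos hkp hC').le]
    calc ∑ i ∈ Icc 1 k, W k i ≤ ∑ i ∈ Icc 1 k, wfun p i / ((k:ℝ) ^ (1/p) * (1 + C)) :=
          Finset.sum_le_sum hterm
      _ = (∑ i ∈ Icc 1 k, wfun p i) / ((k:ℝ) ^ (1/p) * (1 + C)) := by
          rw [Finset.sum_div]
      _ = (k:ℝ) ^ (1/p) / ((k:ℝ) ^ (1/p) * (1 + C)) := by rw [telescope p hp k]
      _ = 1 / (1 + C) := by field_simp
      _ ≤ 1 := by rw [div_le_one hC']; linarith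
  -- column sums
  have hcol : ∀ i ∈ Icc 1 n, ∑ k ∈ Icc i n, W k i ≤ 1 := by
    intro i hi
    obtain ⟨hi1, hin⟩ := Finset.mem_Icc.mp hi
    have hai := hapos i hi
    have hi0 : (0:ℝ) < (i:ℝ) := by exact_mod_cast hi1
    have hi1' : (1:ℝ) ≤ (i:ℝ) := by exact_mod_cast hi1
    have hwi := hw0 i hi1
    have hP : (0:ℝ) < (i:ℝ) ^ (1/p) := Real.rpow_pos_of_pos hi0 _
    have hQ : (0:ℝ) < (i:ℝ) ^ (1 - 1/p) := Real.rpow_pos_of_pos hi0 _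
    have hPQ : (i:ℝ) ^ (1/p) * (i:ℝ) ^ (1 - 1/p) = (i:ℝ) := by
      rw [← Real.rpow_add hi0]; norm_num
    have hwle : wfun p i ≤ (i:ℝ) ^ (1/p) / i := by
      have := w_le p hp i hi1
      rwa [Real.rpow_sub hi0, Real.rpow_one] at this
    have hsplit : Icc i n = insert i (Icc (i+1) n) := by
      ext j; simp only [Finset.mem_Icc, Finset.mem_insert]; omega
    have hsum2 : ∑ k ∈ Icc (i+1) n, a k / (k:ℝ) ^ (1/p) ≤ C * a i * (i:ℝ) ^ (1 - 1/p) :=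
      hasum i hi1 hin
    have heq : ∀ k ∈ Icc i n, W k i = (wfun p i / (a i * (1 + C))) * (a k / (k:ℝ) ^ (1/p)) := by
      intro k hk
      obtain ⟨hik, hkn⟩ := Finset.mem_Icc.mp hk
      have hk0 : (0:ℝ) < (k:ℝ) := by
        have : 1 ≤ k := le_trans hi1 hik
        exact_mod_cast this
      have hkp : (0:ℝ) < (k:ℝ) ^ (1/p) := Real.rpow_pos_of_pos hk0 _
      rw [hWdef]
      field_simp
    rw [Finset.sum_congr rfl heq, ← Finset.mul_sum, hsplit,
      Finset.sum_insert (by simp only [Finset.mem_Icc]; omega)]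
    have hfac0 : 0 ≤ wfun p i / (a i * (1 + C)) := by positivity
    have hstep : wfun p i / (a i * (1 + C)) *
        (a i / (i:ℝ) ^ (1/p) + ∑ k ∈ Icc (i+1) n, a k / (k:ℝ) ^ (1/p)) ≤
        wfun p i / (a i * (1 + C)) *
        (a i / (i:ℝ) ^ (1/p) + C * a i * (i:ℝ) ^ (1 - 1/p)) :=
      mul_le_mul_of_nonneg_left (by linarith) hfac0
    refine hstep.trans ?_
    have h1 : wfun p i / (i:ℝ) ^ (1/p) ≤ 1 := by
      rw [div_le_one hP]
      calc wfun p i ≤ (i:ℝ) ^ (1/p) / i := hwle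
        _ ≤ (i:ℝ) ^ (1/p) := by
            rw [div_le_iff₀ hi0]
            nlinarith
    have h2 : wfun p i * (i:ℝ) ^ (1 - 1/p) ≤ 1 := by
      calc wfun p i * (i:ℝ) ^ (1 - 1/p) ≤ ((i:ℝ) ^ (1/p) / i) * (i:ℝ) ^ (1 - 1/p) :=
            mul_le_mul_of_nonneg_right hwle hQ.le
        _ = 1 := by rw [div_mul_eq_mul_div, hPQ, div_self hi0.ne']
    have hexp : wfun p i / (a i * (1 + C)) *
        (a i / (i:ℝ) ^ (1/p) + C * a i * (i:ℝ) ^ (1 - 1/p)) =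
        (wfun p i / (i:ℝ) ^ (1/p) + C * (wfun p i * (i:ℝ) ^ (1 - 1/p))) / (1 + C) := by
      field_simp
    rw [hexp, div_le_one hC']
    nlinarith
  -- pointwise bound
  have hpoint : ∀ k ∈ Icc 1 n,
      |a k * ((1 / (k:ℝ)) * ∑ i ∈ Icc 1 k, xs i ^ p) ^ (1/p)| / ((1 + C) * ρ) ≤
      ∑ i ∈ Icc 1 k, W k i * (|a i * xs i| / ρ) := by
    intro k hk
    obtain ⟨hk1, hkn⟩ := Finset.mem_Icc.mp hk
    have hak := hapos k hk
    have hk0 : (0:ℝ) < (k:ℝ) := by exact_mod_cast hk1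
    have hkp : (0:ℝ) < (k:ℝ) ^ (1/p) := Real.rpow_pos_of_pos hk0 _
    have hxs0' : ∀ i ∈ Icc 1 k, 0 ≤ xs i := fun i hi => by
      obtain ⟨hi1, hik⟩ := Finset.mem_Icc.mp hi
      exact hxs0 i (Finset.mem_Icc.mpr ⟨hi1, le_trans hik hkn⟩)
    have hS0 : 0 ≤ ∑ i ∈ Icc 1 k, xs i ^ p :=
      Finset.sum_nonneg fun i hi => Real.rpow_nonneg (hxs0' i hi) p
    have hlp := lp_le p hp k xs
      (fun i j h1 h2 h3 => hxsmono i j h1 h2 (le_trans h3 hkn)) hxs0'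
    have habs : |a k * ((1 / (k:ℝ)) * ∑ i ∈ Icc 1 k, xs i ^ p) ^ (1/p)| =
        a k * ((1 / (k:ℝ)) * ∑ i ∈ Icc 1 k, xs i ^ p) ^ (1/p) := by
      apply abs_of_nonneg
      have : (0:ℝ) ≤ ((1 / (k:ℝ)) * ∑ i ∈ Icc 1 k, xs i ^ p) ^ (1/p) :=
        Real.rpow_nonneg (by positivity) _
      positivity
    have hsplit : ((1 / (k:ℝ)) * ∑ i ∈ Icc 1 k, xs i ^ p) ^ (1/p) =
        (∑ i ∈ Icc 1 k, xs i ^ p) ^ (1/p) / (k:ℝ) ^ (1/p) := by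
      rw [Real.mul_rpow (by positivity) hS0, one_div, Real.inv_rpow hk0.le]
      rw [inv_mul_eq_div]
    have hterm : ∀ i ∈ Icc 1 k, W k i * (|a i * xs i| / ρ) =
        (a k / ((k:ℝ) ^ (1/p) * (1 + C) * ρ)) * (xs i * wfun p i) := by
      intro i hi
      obtain ⟨hi1, hik⟩ := Finset.mem_Icc.mp hi
      have hin : i ∈ Icc 1 n := Finset.mem_Icc.mpr ⟨hi1, le_trans hik hkn⟩
      have hai := hapos i hin
      have hxsi := hxs0 i hin
      have habs2 : |a i * xs i| = a i * xs i := abs_of_nonneg (by positivity)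
      rw [hWdef, habs2]
      field_simp
    rw [Finset.sum_congr rfl hterm, ← Finset.mul_sum, habs, hsplit]
    have hfac : (0:ℝ) ≤ a k / ((k:ℝ) ^ (1/p) * (1 + C) * ρ) := by positivity
    have hmul := mul_le_mul_of_nonneg_left hlp hfac
    calc a k * ((∑ i ∈ Icc 1 k, xs i ^ p) ^ (1/p) / (k:ℝ) ^ (1/p)) / ((1 + C) * ρ) =
          (a k / ((k:ℝ) ^ (1/p) * (1 + C) * ρ)) * (∑ i ∈ Icc 1 k, xs i ^ p) ^ (1/p) := by
          field_simp
          try tauto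
      _ ≤ (a k / ((k:ℝ) ^ (1/p) * (1 + C) * ρ)) * ∑ i ∈ Icc 1 k, xs i * wfun p i := hmul
      _ = (a k / ((k:ℝ) ^ (1/p) * (1 + C) * ρ)) * ∑ i ∈ Icc 1 k, xs i * wfun p i := rfl
  -- per-k Jensen
  have hper : ∀ k ∈ Icc 1 n,
      M (|a k * ((1 / (k:ℝ)) * ∑ i ∈ Icc 1 k, xs i ^ p) ^ (1/p)| / ((1 + C) * ρ)) ≤
      ∑ i ∈ Icc 1 k, W k i * M (|a i * xs i| / ρ) := by
    intro k hk
    have hnn1 : (0:ℝ) ≤ |a k * ((1 / (k:ℝ)) * ∑ i ∈ Icc 1 k, xs i ^ p) ^ (1/p)| / ((1 + C) * ρ) := by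
      positivity
    have hnn2 : (0:ℝ) ≤ ∑ i ∈ Icc 1 k, W k i * (|a i * xs i| / ρ) :=
      Finset.sum_nonneg fun i hi => mul_nonneg (hW0 k i hk hi) (by positivity)
    have h1 : M (|a k * ((1 / (k:ℝ)) * ∑ i ∈ Icc 1 k, xs i ^ p) ^ (1/p)| / ((1 + C) * ρ)) ≤
        M (∑ i ∈ Icc 1 k, W k i * (|a i * xs i| / ρ)) :=
      hMmono.monotoneOn (Set.mem_Ici.mpr hnn1) (Set.mem_Ici.mpr hnn2) (hpoint k hk)
    refine h1.trans ?_
    exact jensen_aux M hM0 hconv (Icc 1 k) (W k) (fun i => |a i * xs i| / ρ)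
      (fun i hi => hW0 k i hk hi) (hrow k hk) (fun i hi => by positivity)
  -- assemble
  calc ∑ k ∈ Icc 1 n, M (|a k * ((1 / (k:ℝ)) * ∑ i ∈ Icc 1 k, xs i ^ p) ^ (1/p)| / ((1 + C) * ρ)) ≤
        ∑ k ∈ Icc 1 n, ∑ i ∈ Icc 1 k, W k i * M (|a i * xs i| / ρ) :=
        Finset.sum_le_sum hper
    _ = ∑ i ∈ Icc 1 n, ∑ k ∈ Icc i n, W k i * M (|a i * xs i| / ρ) := by
        apply Finset.sum_comm'
        intro k i
        simp only [Finset.mem_Icc]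
        omega
    _ = ∑ i ∈ Icc 1 n, (∑ k ∈ Icc i n, W k i) * M (|a i * xs i| / ρ) := by
        exact Finset.sum_congr rfl fun i _ => by rw [Finset.sum_mul]
    _ ≤ ∑ i ∈ Icc 1 n, 1 * M (|a i * xs i| / ρ) :=
        Finset.sum_le_sum fun i hi =>
          mul_le_mul_of_nonneg_right (hcol i hi) (hMnn _ (by positivity))
    _ = ∑ i ∈ Icc 1 n, M (|a i * xs i| / ρ) := by
        exact Finset.sum_congr rfl fun i _ => one_mul _
    _ ≤ 1 := hρ1
end

section
/- Let n ∈ ℕ, and for k = 1,…,n let c^k ∈ ℝ^n be the vector with first ⌊n/k⌋ coordinates equal to a_k and remaining coordinates 0, where a_1 ≥ … ≥ a_n > 0. Then for every x ∈ ℝ^n and every k, the average (1/n!)∑_{π ∈ S_n} (∑_{i=1}^n |x_i c^k_{π(i)}|^2)^{1/2} is at least a constant multiple of a_k · (1/k)∑_{i=1}^k x_i*, with an absolute constant independent of n, k, x, a. -/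
open Finset


lemma exists_perm_two {α : Type*} [DecidableEq α] {v v' w w' : α}
    (h1 : v ≠ v') (h2 : w ≠ w') : ∃ τ : Equiv.Perm α, τ v = w ∧ τ v' = w' := by
  by_cases h : v' = w
  · subst h
    refine ⟨Equiv.swap v w' * Equiv.swap v v', ?_, ?_⟩
    · simp [Equiv.Perm.mul_apply, Equiv.swap_apply_left,
        Equiv.swap_apply_of_ne_of_ne (Ne.symm h1) (h2)]
    · simp [Equiv.Perm.mul_apply, Equiv.swap_apply_right, Equiv.swap_apply_left]
  · refine ⟨Equiv.swap v' w' * Equiv.swap v w, ?_, ?_⟩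
    · simp [Equiv.Perm.mul_apply, Equiv.swap_apply_left,
        Equiv.swap_apply_of_ne_of_ne (Ne.symm h) h2]
    · simp [Equiv.Perm.mul_apply, Equiv.swap_apply_of_ne_of_ne (Ne.symm h1) h,
        Equiv.swap_apply_left]

lemma card_fiber_one {n : ℕ} (i v : Fin n) :
    #(univ.filter fun π : Equiv.Perm (Fin n) => π i = v) * n = n.factorial := by
  have hconst : ∀ w : Fin n,
      #(univ.filter fun π : Equiv.Perm (Fin n) => π i = w)
        = #(univ.filter fun π : Equiv.Perm (Fin n) => π i = v) := by
    intro w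
    apply Finset.card_bij' (fun π _ => Equiv.swap w v * π) (fun π _ => Equiv.swap w v * π)
    · intro π hπ
      simp only [mem_filter, mem_univ, true_and] at hπ ⊢
      rw [Equiv.Perm.mul_apply, hπ, Equiv.swap_apply_left]
    · intro π hπ
      simp only [mem_filter, mem_univ, true_and] at hπ ⊢
      rw [Equiv.Perm.mul_apply, hπ, Equiv.swap_apply_right]
    · intro π _; rw [← mul_assoc, Equiv.swap_mul_self, one_mul]
    · intro π _; rw [← mul_assoc, Equiv.swap_mul_self, one_mul]
  have h := Finset.card_eq_sum_card_fiberwise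
    (f := fun π : Equiv.Perm (Fin n) => π i) (s := univ) (t := univ)
    (fun x _ => mem_univ _)
  rw [card_univ, Fintype.card_perm, Fintype.card_fin] at h
  rw [h, Finset.sum_congr rfl (fun w _ => hconst w), Finset.sum_const, card_univ,
    Fintype.card_fin, smul_eq_mul, mul_comm]

lemma card_fiber_two {n : ℕ} {i i' : Fin n} (hi : i ≠ i') {v v' : Fin n} (hv : v ≠ v') :
    #(univ.filter fun π : Equiv.Perm (Fin n) => π i = v ∧ π i' = v') * (n * (n-1))
      = n.factorial := by
  have hconst : ∀ w w' : Fin n, w ≠ w' →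
      #(univ.filter fun π : Equiv.Perm (Fin n) => π i = w ∧ π i' = w')
        = #(univ.filter fun π : Equiv.Perm (Fin n) => π i = v ∧ π i' = v') := by
    intro w w' hw
    obtain ⟨τ, hτ1, hτ2⟩ := exists_perm_two hw hv
    apply Finset.card_bij' (fun π _ => τ * π) (fun π _ => τ⁻¹ * π)
    · intro π hπ
      simp only [mem_filter, mem_univ, true_and] at hπ ⊢
      rw [Equiv.Perm.mul_apply, Equiv.Perm.mul_apply, hπ.1, hπ.2, hτ1, hτ2]
      exact ⟨rfl, rfl⟩
    · intro π hπ
      simp only [mem_filter, mem_univ, true_and] at hπ ⊢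
      rw [Equiv.Perm.mul_apply, Equiv.Perm.mul_apply, hπ.1, hπ.2, ← hτ1, ← hτ2]
      simp
    · intro π _; rw [← mul_assoc, inv_mul_cancel, one_mul]
    · intro π _; rw [← mul_assoc, mul_inv_cancel, one_mul]
  have h := Finset.card_eq_sum_card_fiberwise
    (f := fun π : Equiv.Perm (Fin n) => (π i, π i')) (s := univ)
    (t := (univ : Finset (Fin n)).offDiag)
    (fun π _ => Finset.mem_offDiag.2 ⟨mem_univ _, mem_univ _, fun hc => hi (π.injective hc)⟩)
  rw [card_univ, Fintype.card_perm, Fintype.card_fin] at h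
  have hfib : ∀ p ∈ (univ : Finset (Fin n)).offDiag,
      #(univ.filter fun π : Equiv.Perm (Fin n) => (π i, π i') = p)
        = #(univ.filter fun π : Equiv.Perm (Fin n) => π i = v ∧ π i' = v') := by
    intro p hp
    obtain ⟨-, -, hne⟩ := Finset.mem_offDiag.1 hp
    rw [show (univ.filter fun π : Equiv.Perm (Fin n) => (π i, π i') = p)
        = (univ.filter fun π : Equiv.Perm (Fin n) => π i = p.1 ∧ π i' = p.2) by
      apply Finset.filter_congr; intro π _; rw [Prod.ext_iff]]
    exact hconst p.1 p.2 hne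
  rw [h, Finset.sum_congr rfl hfib, Finset.sum_const, smul_eq_mul,
    Finset.offDiag_card, card_univ, Fintype.card_fin, mul_comm, Nat.mul_sub_one]

lemma card_val_lt {n m : ℕ} (hm : m ≤ n) :
    #(univ.filter fun v : Fin n => (v : ℕ) < m) = m := by
  have himg : (univ.filter fun v : Fin n => (v : ℕ) < m).image Fin.val
      = Finset.range m := by
    ext p
    simp only [Finset.mem_image, Finset.mem_filter, Finset.mem_univ, true_and,
      Finset.mem_range]
    constructor
    · rintro ⟨v, hv, rfl⟩; exact hv
    · intro hp; exact ⟨⟨p, lt_of_lt_of_le hp hm⟩, hp, rfl⟩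
  have h2 := Finset.card_image_of_injective
    (univ.filter fun v : Fin n => (v : ℕ) < m) Fin.val_injective
  rw [himg, Finset.card_range] at h2
  exact h2.symm

lemma count_lt_one {n : ℕ} (m : ℕ) (hm : m ≤ n) (i : Fin n) :
    #(univ.filter fun π : Equiv.Perm (Fin n) => (π i : ℕ) < m) * n = m * n.factorial := by
  have h := Finset.card_eq_sum_card_fiberwise
    (f := fun π : Equiv.Perm (Fin n) => π i)
    (s := univ.filter fun π : Equiv.Perm (Fin n) => (π i : ℕ) < m)
    (t := univ.filter fun v : Fin n => (v : ℕ) < m)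
    (fun π hπ => by simp only [mem_coe, mem_filter, mem_univ, true_and] at hπ ⊢; exact hπ)
  have hterm : ∀ v ∈ (univ.filter fun v : Fin n => (v : ℕ) < m),
      #((univ.filter fun π : Equiv.Perm (Fin n) => (π i : ℕ) < m).filter
          fun π => π i = v) * n = n.factorial := by
    intro v hv
    simp only [mem_filter, mem_univ, true_and] at hv
    rw [Finset.filter_filter,
      show (univ.filter fun π : Equiv.Perm (Fin n) => (π i : ℕ) < m ∧ π i = v)
        = (univ.filter fun π : Equiv.Perm (Fin n) => π i = v) by
        apply Finset.filter_congr; intro π _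
        constructor
        · rintro ⟨-, h2⟩; exact h2
        · rintro h2; exact ⟨h2 ▸ hv, h2⟩]
    exact card_fiber_one i v
  rw [h, Finset.sum_mul, Finset.sum_congr rfl hterm, Finset.sum_const, smul_eq_mul,
    card_val_lt hm]

lemma count_lt_two {n : ℕ} (m : ℕ) (hm : m ≤ n) {i i' : Fin n} (hi : i ≠ i') :
    #(univ.filter fun π : Equiv.Perm (Fin n) => (π i : ℕ) < m ∧ (π i' : ℕ) < m)
      * (n * (n-1)) = m * (m-1) * n.factorial := by
  have h := Finset.card_eq_sum_card_fiberwise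
    (f := fun π : Equiv.Perm (Fin n) => (π i, π i'))
    (s := univ.filter fun π : Equiv.Perm (Fin n) => (π i : ℕ) < m ∧ (π i' : ℕ) < m)
    (t := (univ.filter fun v : Fin n => (v : ℕ) < m).offDiag)
    (fun π hπ => by
      simp only [mem_coe, mem_filter, mem_univ, true_and] at hπ ⊢
      exact Finset.mem_offDiag.2 ⟨by simp [hπ.1], by simp [hπ.2],
        fun hc => hi (π.injective hc)⟩)
  have hterm : ∀ p ∈ (univ.filter fun v : Fin n => (v : ℕ) < m).offDiag,
      #((univ.filter fun π : Equiv.Perm (Fin n) => (π i : ℕ) < m ∧ (π i' : ℕ) < m).filter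
          fun π => (π i, π i') = p) * (n * (n-1)) = n.factorial := by
    intro p hp
    obtain ⟨h1, h2, hne⟩ := Finset.mem_offDiag.1 hp
    simp only [mem_filter, mem_univ, true_and] at h1 h2
    rw [Finset.filter_filter,
      show (univ.filter fun π : Equiv.Perm (Fin n) =>
          ((π i : ℕ) < m ∧ (π i' : ℕ) < m) ∧ (π i, π i') = p)
        = (univ.filter fun π : Equiv.Perm (Fin n) => π i = p.1 ∧ π i' = p.2) by
        apply Finset.filter_congr; intro π _
        rw [Prod.ext_iff]
        constructor
        · rintro ⟨-, h3⟩; exact h3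
        · rintro ⟨h3, h4⟩; exact ⟨⟨h3 ▸ h1, h4 ▸ h2⟩, h3, h4⟩]
    exact card_fiber_two hi hne
  have hcard : #((univ.filter fun v : Fin n => (v : ℕ) < m).offDiag) = m * (m-1) := by
    rw [Finset.offDiag_card, card_val_lt hm, Nat.mul_sub_one]
  rw [h, Finset.sum_mul, Finset.sum_congr rfl hterm, Finset.sum_const, smul_eq_mul, hcard]

theorem stmt_16 :
    ∃ c : ℝ, 0 < c ∧
      ∀ (n : ℕ) (a : ℕ → ℝ),
        (∀ i j, 1 ≤ i → i ≤ j → j ≤ n → a j ≤ a i) →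
        (∀ i ∈ Finset.Icc 1 n, 0 < a i) →
      ∀ (x xs : Fin n → ℝ),
        -- `xs` is the non-increasing rearrangement of `(|x i|)`
        Antitone xs →
        (∃ σ : Equiv.Perm (Fin n), ∀ i, xs i = |x (σ i)|) →
      ∀ (k : ℕ), 1 ≤ k → k ≤ n →
        c * (a k * ((1 / (k : ℝ)) *
              ∑ i ∈ Finset.univ.filter (fun i : Fin n => (i : ℕ) < k), xs i)) ≤
          (1 / (n.factorial : ℝ)) * ∑ π : Equiv.Perm (Fin n),
            (∑ i, |x i * (if ((π i : ℕ)) < n / k then a k else 0)| ^ (2 : ℝ))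
              ^ ((1 : ℝ) / 2) := by
  refine ⟨1/4, by norm_num, ?_⟩
  rintro n a hmono hpos x xs hanti ⟨σ, hσ⟩ k hk1 hkn
  have hn : 0 < n := hk1.trans hkn
  have hk0 : 0 < k := hk1
  have hm1 : 1 ≤ n / k := (Nat.one_le_div_iff hk0).2 hkn
  have hmn : n / k ≤ n := Nat.div_le_self n k
  have hkmle : k * (n / k) ≤ n := Nat.mul_div_le n k
  have hkmge : n + 1 ≤ 2 * (k * (n / k)) := by
    have h1 := Nat.div_add_mod n k
    have h2 := Nat.mod_lt n hk0
    have h3 : k ≤ k * (n / k) := Nat.le_mul_of_pos_right k hm1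
    omega
  have hak : 0 < a k := hpos k (Finset.mem_Icc.2 ⟨hk1, hkn⟩)
  have hxs0 : ∀ j, 0 ≤ xs j := fun j => (hσ j) ▸ abs_nonneg _
  set F : Finset (Fin n) := univ.filter fun j : Fin n => (j : ℕ) < k with hF
  have hcardF : #F = k := card_val_lt hkn
  -- uniqueness of the argmin
  have huniq : ∀ (π : Equiv.Perm (Fin n)) (j j' : Fin n),
      ((π (σ j) : ℕ) < n / k ∧ ∀ t : Fin n, (t : ℕ) < k → (π (σ j) : ℕ) ≤ (π (σ t) : ℕ)) →
      ((π (σ j') : ℕ) < n / k ∧ ∀ t : Fin n, (t : ℕ) < k → (π (σ j') : ℕ) ≤ (π (σ t) : ℕ)) →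
      (j : ℕ) < k → (j' : ℕ) < k → j = j' := by
    intro π j j' h1 h2 hj hj'
    have h3 : (π (σ j) : ℕ) = (π (σ j') : ℕ) :=
      le_antisymm (h1.2 j' hj') (h2.2 j hj)
    exact σ.injective (π.injective (Fin.ext h3))
  -- pointwise: single large coordinate bounds the norm from below
  have hnorm0 : ∀ π : Equiv.Perm (Fin n),
      (0:ℝ) ≤ (∑ i, |x i * (if ((π i : ℕ)) < n / k then a k else 0)| ^ (2 : ℝ))
        ^ ((1 : ℝ) / 2) :=
    fun π => Real.rpow_nonneg
      (Finset.sum_nonneg fun i _ => Real.rpow_nonneg (abs_nonneg _) _) _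
  have hnormge : ∀ (π : Equiv.Perm (Fin n)) (j : Fin n), (π (σ j) : ℕ) < n / k →
      a k * xs j ≤ (∑ i, |x i * (if ((π i : ℕ)) < n / k then a k else 0)| ^ (2 : ℝ))
        ^ ((1 : ℝ) / 2) := by
    intro π j hj
    have hterm : |x (σ j) * a k| ^ (2:ℝ)
        ≤ ∑ i, |x i * (if ((π i : ℕ)) < n / k then a k else 0)| ^ (2 : ℝ) := by
      have h := Finset.single_le_sum
        (f := fun i => |x i * (if ((π i : ℕ)) < n / k then a k else 0)| ^ (2:ℝ))
        (fun i _ => Real.rpow_nonneg (abs_nonneg _) _) (Finset.mem_univ (σ j))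
      simpa [if_pos hj] using h
    have habs : ∀ y : ℝ, (|y| ^ (2:ℝ)) ^ ((1:ℝ)/2) = |y| := by
      intro y
      have h1 : |y| ^ (2:ℝ) = |y| ^ (2:ℕ) := by
        rw [← Real.rpow_natCast |y| 2]; norm_num
      rw [h1, ← Real.sqrt_eq_rpow, Real.sqrt_sq_eq_abs, abs_abs]
    calc a k * xs j = |x (σ j) * a k| := by
          rw [hσ j, abs_mul, abs_of_pos hak, mul_comm]
      _ = (|x (σ j) * a k| ^ (2:ℝ)) ^ ((1:ℝ)/2) := (habs _).symm
      _ ≤ _ := Real.rpow_le_rpow (Real.rpow_nonneg (abs_nonneg _) _) hterm (by norm_num)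
  -- pointwise : weighted indicator sum bounds the norm from below
  have hpoint : ∀ π : Equiv.Perm (Fin n),
      a k * ∑ j ∈ F, xs j *
        (if ((π (σ j) : ℕ) < n / k ∧ ∀ t : Fin n, (t : ℕ) < k →
            (π (σ j) : ℕ) ≤ (π (σ t) : ℕ)) then (1:ℝ) else 0)
      ≤ (∑ i, |x i * (if ((π i : ℕ)) < n / k then a k else 0)| ^ (2 : ℝ))
          ^ ((1 : ℝ) / 2) := by
    intro π
    by_cases hex : ∃ j ∈ F, ((π (σ j) : ℕ) < n / k ∧ ∀ t : Fin n, (t : ℕ) < k →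
        (π (σ j) : ℕ) ≤ (π (σ t) : ℕ))
    · obtain ⟨j0, hj0F, hj0⟩ := hex
      have hj0k : (j0 : ℕ) < k := by
        rw [hF] at hj0F; simpa using hj0F
      rw [Finset.sum_eq_single_of_mem j0 hj0F]
      · rw [if_pos hj0, mul_one]
        exact hnormge π j0 hj0.1
      · intro b hbF hbne
        rw [if_neg, mul_zero]
        intro hb
        exact hbne (huniq π b j0 hb hj0 (by rw [hF] at hbF; simpa using hbF) hj0k)
    · rw [Finset.sum_eq_zero, mul_zero]
      · exact hnorm0 π
      · intro b hbF
        rw [if_neg, mul_zero]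
        exact fun hb => hex ⟨b, hbF, hb⟩
  -- all the per-index indicator sums are equal
  have hswap : ∀ j j' : Fin n, (j : ℕ) < k → (j' : ℕ) < k →
      (∑ π : Equiv.Perm (Fin n),
        (if ((π (σ j) : ℕ) < n / k ∧ ∀ t : Fin n, (t : ℕ) < k →
            (π (σ j) : ℕ) ≤ (π (σ t) : ℕ)) then (1:ℝ) else 0))
      = ∑ π : Equiv.Perm (Fin n),
        (if ((π (σ j') : ℕ) < n / k ∧ ∀ t : Fin n, (t : ℕ) < k →
            (π (σ j') : ℕ) ≤ (π (σ t) : ℕ)) then (1:ℝ) else 0) := by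
    intro j j' hj hj'
    set τ : Equiv.Perm (Fin n) := Equiv.swap (σ j) (σ j') with hτ
    have hτσ : ∀ t : Fin n, τ (σ t) = σ (Equiv.swap j j' t) := by
      intro t
      by_cases h1 : t = j
      · subst h1; simp [hτ]
      · by_cases h2 : t = j'
        · subst h2; simp [hτ]
        · rw [Equiv.swap_apply_of_ne_of_ne h1 h2, hτ,
            Equiv.swap_apply_of_ne_of_ne (fun hc => h1 (σ.injective hc))
              (fun hc => h2 (σ.injective hc))]
    have hswapk : ∀ s : Fin n, (s : ℕ) < k → ((Equiv.swap j j' s : Fin n) : ℕ) < k := by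
      intro s hs
      by_cases h1 : s = j
      · subst h1; rw [Equiv.swap_apply_left]; exact hj'
      · by_cases h2 : s = j'
        · subst h2; rw [Equiv.swap_apply_right]; exact hj
        · rw [Equiv.swap_apply_of_ne_of_ne h1 h2]; exact hs
    apply Fintype.sum_equiv (Equiv.mulRight τ)
    intro π
    have happ : ∀ t : Fin n, ((π * τ) (σ t)) = π (σ (Equiv.swap j j' t)) := by
      intro t; rw [Equiv.Perm.mul_apply, hτσ]
    simp only [Equiv.coe_mulRight]
    congr 1
    apply propext
    constructor
    · rintro ⟨h1, h2⟩
      constructor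
      · rw [happ j', Equiv.swap_apply_right]
        exact h1
      · intro t ht
        rw [happ j', Equiv.swap_apply_right, happ t]
        exact h2 _ (hswapk t ht)
    · rintro ⟨h1, h2⟩
      rw [happ j', Equiv.swap_apply_right] at h1 h2
      refine ⟨h1, fun t ht => ?_⟩
      have h3 := h2 (Equiv.swap j j' t) (hswapk t ht)
      rwa [happ, Equiv.swap_apply_self] at h3
  -- partition identity
  have hpart : ∀ π : Equiv.Perm (Fin n),
      (∑ j ∈ F, (if ((π (σ j) : ℕ) < n / k ∧ ∀ t : Fin n, (t : ℕ) < k →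
          (π (σ j) : ℕ) ≤ (π (σ t) : ℕ)) then (1:ℝ) else 0))
      = (if (∃ t : Fin n, (t : ℕ) < k ∧ (π (σ t) : ℕ) < n / k) then (1:ℝ) else 0) := by
    intro π
    by_cases hD : ∃ t : Fin n, (t : ℕ) < k ∧ (π (σ t) : ℕ) < n / k
    · obtain ⟨t0, ht0k, ht0⟩ := hD
      have ht0F : t0 ∈ F := by rw [hF]; simp [ht0k]
      obtain ⟨j0, hj0F, hj0min⟩ := Finset.exists_min_image F
        (fun j => (π (σ j) : ℕ)) ⟨t0, ht0F⟩
      have hj0k : (j0 : ℕ) < k := by rw [hF] at hj0F; simpa using hj0F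
      have hj0 : (π (σ j0) : ℕ) < n / k ∧ ∀ t : Fin n, (t : ℕ) < k →
          (π (σ j0) : ℕ) ≤ (π (σ t) : ℕ) := by
        refine ⟨lt_of_le_of_lt (hj0min t0 ht0F) ht0, fun t ht => hj0min t ?_⟩
        rw [hF]; simp [ht]
      rw [Finset.sum_eq_single_of_mem j0 hj0F, if_pos hj0,
        if_pos ⟨t0, ht0k, ht0⟩]
      intro b hbF hbne
      rw [if_neg]
      intro hb
      exact hbne (huniq π b j0 hb hj0 (by rw [hF] at hbF; simpa using hbF) hj0k)
    · rw [if_neg hD, Finset.sum_eq_zero]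
      intro b hbF
      rw [if_neg]
      intro hb
      exact hD ⟨b, (by rw [hF] at hbF; simpa using hbF), hb.1⟩
  have hND4 : (n.factorial : ℝ) / 4 ≤ ∑ π : Equiv.Perm (Fin n),
      (if (∃ t : Fin n, (t : ℕ) < k ∧ (π (σ t) : ℕ) < n / k) then (1:ℝ) else 0) := by
    -- pointwise Bonferroni
    have hpt : ∀ π : Equiv.Perm (Fin n),
        (#(F.filter fun t => (π (σ t) : ℕ) < n / k) : ℝ)
          - ((#(F.filter fun t => (π (σ t) : ℕ) < n / k) : ℝ) ^ 2
              - (#(F.filter fun t => (π (σ t) : ℕ) < n / k) : ℝ)) / 2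
        ≤ (if (∃ t : Fin n, (t : ℕ) < k ∧ (π (σ t) : ℕ) < n / k) then (1:ℝ) else 0) := by
      intro π
      set ν : ℕ := #(F.filter fun t => (π (σ t) : ℕ) < n / k) with hν
      by_cases hD : ∃ t : Fin n, (t : ℕ) < k ∧ (π (σ t) : ℕ) < n / k
      · rw [if_pos hD]
        obtain ⟨t0, ht0k, ht0⟩ := hD
        have hν1 : 1 ≤ ν := by
          refine Finset.card_pos.2 ⟨t0, Finset.mem_filter.2 ⟨?_, ht0⟩⟩
          rw [hF]; simp [ht0k]
        rcases Nat.lt_or_ge ν 2 with h | h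
        · have : ν = 1 := le_antisymm (Nat.lt_succ_iff.1 h) hν1
          rw [this]; norm_num
        · have h2 : (2:ℝ) ≤ ν := by exact_mod_cast h
          nlinarith
      · rw [if_neg hD]
        have hν0 : ν = 0 := by
          rw [hν, Finset.card_eq_zero, Finset.filter_eq_empty_iff]
          intro t htF hc
          exact hD ⟨t, (by rw [hF] at htF; simpa using htF), hc⟩
        rw [hν0]; norm_num
    -- sum of cards
    have hSN : (∑ π : Equiv.Perm (Fin n),
        (#(F.filter fun t => (π (σ t) : ℕ) < n / k) : ℝ)) * n
        = k * (n / k : ℕ) * n.factorial := by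
      have h1 : ∀ π : Equiv.Perm (Fin n),
          (#(F.filter fun t => (π (σ t) : ℕ) < n / k) : ℝ)
          = ∑ t ∈ F, (if (π (σ t) : ℕ) < n / k then (1:ℝ) else 0) := by
        intro π; rw [Finset.sum_boole]
      rw [Finset.sum_congr rfl fun π _ => h1 π, Finset.sum_comm, Finset.sum_mul]
      have h2 : ∀ t, t ∈ F → (∑ π : Equiv.Perm (Fin n),
          (if (π (σ t) : ℕ) < n / k then (1:ℝ) else 0)) * n
          = (n / k : ℕ) * n.factorial := by
        intro t _
        rw [Finset.sum_boole]
        exact_mod_cast congrArg (Nat.cast : ℕ → ℝ) (count_lt_one (n/k) hmn (σ t))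
      rw [Finset.sum_congr rfl h2, Finset.sum_const, hcardF, nsmul_eq_mul]
      ring
    -- sum of pair counts
    have hSP : (∑ π : Equiv.Perm (Fin n),
        ((#(F.filter fun t => (π (σ t) : ℕ) < n / k) : ℝ) ^ 2
          - (#(F.filter fun t => (π (σ t) : ℕ) < n / k) : ℝ)))
        * ((n * (n-1) : ℕ) : ℝ)
        = (#(F.offDiag) : ℝ) * (((n/k) * ((n/k) - 1) : ℕ) : ℝ) * n.factorial := by
      have h1 : ∀ π : Equiv.Perm (Fin n),
          ((#(F.filter fun t => (π (σ t) : ℕ) < n / k) : ℝ) ^ 2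
            - (#(F.filter fun t => (π (σ t) : ℕ) < n / k) : ℝ))
          = ∑ p ∈ F.offDiag,
              (if ((π (σ p.1) : ℕ) < n / k ∧ (π (σ p.2) : ℕ) < n / k)
                then (1:ℝ) else 0) := by
        intro π
        rw [Finset.sum_boole]
        have h2 : F.offDiag.filter
              (fun p => (π (σ p.1) : ℕ) < n / k ∧ (π (σ p.2) : ℕ) < n / k)
            = (F.filter fun t => (π (σ t) : ℕ) < n / k).offDiag := by
          ext p
          simp only [Finset.mem_filter, Finset.mem_offDiag]
          tauto
        have h3 : #(F.filter fun t => (π (σ t) : ℕ) < n / k)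
            ≤ #(F.filter fun t => (π (σ t) : ℕ) < n / k)
              * #(F.filter fun t => (π (σ t) : ℕ) < n / k) := by
          rcases Nat.eq_zero_or_pos #(F.filter fun t => (π (σ t) : ℕ) < n / k) with h | h
          · rw [h]
          · exact Nat.le_mul_of_pos_left _ h
        rw [h2, Finset.offDiag_card]
        push_cast [Nat.cast_sub h3]
        ring
      rw [Finset.sum_congr rfl fun π _ => h1 π, Finset.sum_comm, Finset.sum_mul]
      have h4 : ∀ p : Fin n × Fin n, p ∈ F.offDiag → (∑ π : Equiv.Perm (Fin n),
          (if ((π (σ p.1) : ℕ) < n / k ∧ (π (σ p.2) : ℕ) < n / k)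
            then (1:ℝ) else 0)) * ((n * (n-1) : ℕ) : ℝ)
          = (((n/k) * ((n/k) - 1) : ℕ) : ℝ) * n.factorial := by
        intro p hp
        obtain ⟨-, -, hne⟩ := Finset.mem_offDiag.1 hp
        rw [Finset.sum_boole]
        exact_mod_cast congrArg (Nat.cast : ℕ → ℝ)
          (count_lt_two (n/k) hmn (fun hc => hne (σ.injective hc)))
      rw [Finset.sum_congr rfl h4, Finset.sum_const, nsmul_eq_mul]
      ring
    -- bound on the pair sum
    have hSPle : (∑ π : Equiv.Perm (Fin n),
        ((#(F.filter fun t => (π (σ t) : ℕ) < n / k) : ℝ) ^ 2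
          - (#(F.filter fun t => (π (σ t) : ℕ) < n / k) : ℝ))) * (n:ℝ)
        ≤ (k:ℝ) * ((n/k : ℕ):ℝ) * n.factorial := by
      rcases Nat.lt_or_ge k 2 with hk2 | hk2
      · have hzero : ∀ π : Equiv.Perm (Fin n),
            ((#(F.filter fun t => (π (σ t) : ℕ) < n / k) : ℝ) ^ 2
              - (#(F.filter fun t => (π (σ t) : ℕ) < n / k) : ℝ)) = 0 := by
          intro π
          have hle : #(F.filter fun t => (π (σ t) : ℕ) < n / k) ≤ 1 := by
            calc #(F.filter fun t => (π (σ t) : ℕ) < n / k) ≤ #F :=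
                  Finset.card_filter_le _ _
              _ = k := hcardF
              _ ≤ 1 := by omega
          interval_cases h : #(F.filter fun t => (π (σ t) : ℕ) < n / k) <;> norm_num
        rw [Finset.sum_congr rfl fun π _ => hzero π, Finset.sum_const, smul_zero, zero_mul]
        positivity
      · have hn2 : 2 ≤ n := hk2.trans hkn
        have hcast1 : ((n * (n-1) : ℕ) : ℝ) = (n:ℝ) * ((n:ℝ) - 1) := by
          push_cast [Nat.cast_sub (by omega : 1 ≤ n)]; ring
        have hcast2 : (((n/k) * ((n/k) - 1) : ℕ) : ℝ)
            = ((n/k : ℕ):ℝ) * (((n/k : ℕ):ℝ) - 1) := by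
          push_cast [Nat.cast_sub hm1]; ring
        have hcast3 : (#(F.offDiag) : ℝ) = (k:ℝ)^2 - (k:ℝ) := by
          rw [Finset.offDiag_card, hcardF]
          push_cast [Nat.cast_sub (Nat.le_mul_of_pos_left k hk1)]
          ring
        rw [hcast1, hcast2, hcast3] at hSP
        have hK : (1:ℝ) ≤ (k:ℝ) := by exact_mod_cast hk1
        have hMu : (1:ℝ) ≤ ((n/k : ℕ):ℝ) := by exact_mod_cast hm1
        have hKM : (k:ℝ) * ((n/k : ℕ):ℝ) ≤ (n:ℝ) := by exact_mod_cast hkmle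
        have hfac : (0:ℝ) ≤ (n.factorial : ℝ) := by positivity
        have hbd : ((k:ℝ)^2 - (k:ℝ)) * (((n/k : ℕ):ℝ)^2 - ((n/k : ℕ):ℝ))
            ≤ (k:ℝ) * ((n/k : ℕ):ℝ) * ((n:ℝ) - 1) := by
          nlinarith [mul_nonneg (sub_nonneg.2 hK) (sub_nonneg.2 hMu),
            mul_pos (lt_of_lt_of_le one_pos hK) (lt_of_lt_of_le one_pos hMu)]
        have hn1 : (0:ℝ) < (n:ℝ) - 1 := by
          have : (2:ℝ) ≤ (n:ℝ) := by exact_mod_cast hn2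
          linarith
        apply le_of_mul_le_mul_right _ hn1
        calc (∑ π : Equiv.Perm (Fin n),
              ((#(F.filter fun t => (π (σ t) : ℕ) < n / k) : ℝ) ^ 2
                - (#(F.filter fun t => (π (σ t) : ℕ) < n / k) : ℝ))) * (n:ℝ)
              * ((n:ℝ) - 1)
            = (∑ π : Equiv.Perm (Fin n),
              ((#(F.filter fun t => (π (σ t) : ℕ) < n / k) : ℝ) ^ 2
                - (#(F.filter fun t => (π (σ t) : ℕ) < n / k) : ℝ)))
              * ((n:ℝ) * ((n:ℝ) - 1)) := by ring
          _ = ((k:ℝ)^2 - (k:ℝ)) * (((n/k : ℕ):ℝ)^2 - ((n/k : ℕ):ℝ)) * n.factorial := by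
              rw [hSP]; push_cast; ring
          _ ≤ (k:ℝ) * ((n/k : ℕ):ℝ) * ((n:ℝ) - 1) * n.factorial :=
              mul_le_mul_of_nonneg_right hbd hfac
          _ = (k:ℝ) * ((n/k : ℕ):ℝ) * n.factorial * ((n:ℝ) - 1) := by ring
    -- combine
    have hptsum := Finset.sum_le_sum (fun π (_ : π ∈ (univ : Finset (Equiv.Perm (Fin n)))) => hpt π)
    rw [Finset.sum_sub_distrib, ← Finset.sum_div] at hptsum
    have hN0 : (0:ℝ) < (n:ℝ) := by exact_mod_cast hn
    have hfac : (0:ℝ) ≤ (n.factorial : ℝ) := by positivity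
    have h2km : (n:ℝ) + 1 ≤ 2 * ((k:ℝ) * ((n/k : ℕ):ℝ)) := by exact_mod_cast hkmge
    apply le_of_mul_le_mul_right _ hN0
    have hstep : ((∑ π : Equiv.Perm (Fin n),
          (#(F.filter fun t => (π (σ t) : ℕ) < n / k) : ℝ))
        - (∑ π : Equiv.Perm (Fin n),
          ((#(F.filter fun t => (π (σ t) : ℕ) < n / k) : ℝ) ^ 2
            - (#(F.filter fun t => (π (σ t) : ℕ) < n / k) : ℝ))) / 2) * (n:ℝ)
        ≤ (∑ π : Equiv.Perm (Fin n),
          (if (∃ t : Fin n, (t : ℕ) < k ∧ (π (σ t) : ℕ) < n / k) then (1:ℝ) else 0)) * (n:ℝ) :=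
      mul_le_mul_of_nonneg_right hptsum (le_of_lt hN0)
    nlinarith [hstep, hSN, hSPle, mul_nonneg hfac (le_of_lt hN0)]
  set ND : ℝ := ∑ π : Equiv.Perm (Fin n),
    (if (∃ t : Fin n, (t : ℕ) < k ∧ (π (σ t) : ℕ) < n / k) then (1:ℝ) else 0) with hNDdef
  have hK0 : (0:ℝ) < (k:ℝ) := by exact_mod_cast hk1
  have hfacpos : (0:ℝ) < (n.factorial : ℝ) := by
    exact_mod_cast Nat.factorial_pos n
  have hS0 : (0:ℝ) ≤ ∑ i ∈ F, xs i := Finset.sum_nonneg fun i _ => hxs0 i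
  have hA : ∀ j ∈ F, (k:ℝ) * (∑ π : Equiv.Perm (Fin n),
      (if ((π (σ j) : ℕ) < n / k ∧ ∀ t : Fin n, (t : ℕ) < k →
          (π (σ j) : ℕ) ≤ (π (σ t) : ℕ)) then (1:ℝ) else 0)) = ND := by
    intro j hjF
    have hjk : (j : ℕ) < k := by rw [hF] at hjF; simpa using hjF
    have h1 : ∀ j' ∈ F, (∑ π : Equiv.Perm (Fin n),
        (if ((π (σ j') : ℕ) < n / k ∧ ∀ t : Fin n, (t : ℕ) < k →
            (π (σ j') : ℕ) ≤ (π (σ t) : ℕ)) then (1:ℝ) else 0))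
        = ∑ π : Equiv.Perm (Fin n),
        (if ((π (σ j) : ℕ) < n / k ∧ ∀ t : Fin n, (t : ℕ) < k →
            (π (σ j) : ℕ) ≤ (π (σ t) : ℕ)) then (1:ℝ) else 0) := by
      intro j' hj'F
      exact hswap j' j (by rw [hF] at hj'F; simpa using hj'F) hjk
    calc (k:ℝ) * _ = ∑ j' ∈ F, (∑ π : Equiv.Perm (Fin n),
          (if ((π (σ j') : ℕ) < n / k ∧ ∀ t : Fin n, (t : ℕ) < k →
              (π (σ j') : ℕ) ≤ (π (σ t) : ℕ)) then (1:ℝ) else 0)) := by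
          rw [Finset.sum_congr rfl h1, Finset.sum_const, hcardF, nsmul_eq_mul]
      _ = ∑ π : Equiv.Perm (Fin n), ∑ j' ∈ F,
          (if ((π (σ j') : ℕ) < n / k ∧ ∀ t : Fin n, (t : ℕ) < k →
              (π (σ j') : ℕ) ≤ (π (σ t) : ℕ)) then (1:ℝ) else 0) := Finset.sum_comm
      _ = ND := by rw [hNDdef]; exact Finset.sum_congr rfl fun π _ => hpart π
  have hmain : a k * ((∑ i ∈ F, xs i) * (ND / (k:ℝ))) ≤
      ∑ π : Equiv.Perm (Fin n),
        (∑ i, |x i * (if ((π i : ℕ)) < n / k then a k else 0)| ^ (2 : ℝ))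
          ^ ((1 : ℝ) / 2) := by
    have h2 := Finset.sum_le_sum
      (fun π (_ : π ∈ (univ : Finset (Equiv.Perm (Fin n)))) => hpoint π)
    rw [← Finset.mul_sum, Finset.sum_comm] at h2
    have h3 : ∀ j ∈ F, (∑ π : Equiv.Perm (Fin n), xs j *
        (if ((π (σ j) : ℕ) < n / k ∧ ∀ t : Fin n, (t : ℕ) < k →
            (π (σ j) : ℕ) ≤ (π (σ t) : ℕ)) then (1:ℝ) else 0))
        = xs j * (ND / (k:ℝ)) := by
      intro j hjF
      rw [← Finset.mul_sum]
      congr 1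
      rw [eq_div_iff (ne_of_gt hK0), mul_comm]
      exact hA j hjF
    rw [Finset.sum_congr rfl h3, ← Finset.sum_mul] at h2
    exact h2
  conv_rhs => rw [one_div_mul_eq_div]
  rw [le_div_iff₀ hfacpos]
  have hnn : (0:ℝ) ≤ a k * (∑ i ∈ F, xs i) / (k:ℝ) :=
    div_nonneg (mul_nonneg (le_of_lt hak) hS0) (le_of_lt hK0)
  calc 1/4 * (a k * ((1 / (k : ℝ)) * ∑ i ∈ F, xs i)) * (n.factorial : ℝ)
      = (a k * (∑ i ∈ F, xs i) / (k:ℝ)) * ((n.factorial : ℝ) / 4) := by ring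
    _ ≤ (a k * (∑ i ∈ F, xs i) / (k:ℝ)) * ND := mul_le_mul_of_nonneg_left hND4 hnn
    _ = a k * ((∑ i ∈ F, xs i) * (ND / (k:ℝ))) := by ring
    _ ≤ _ := hmain
end
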